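/- arXiv:1609.08571 — 7 statements merged into one kernel-verified Lean document; each statement's English description precedes it below -/
import Mathlib

section
/- Let T ≥ 1 and d ≥ 1, let U_1, …, U_T be unitary d×d complex matrices, let a_0,…,a_T be real numbers and b_0,…,b_{T−1} complex numbers. Define on ℂ^{T+1}⊗ℂ^d the matrices H_prop := Σ_{t=0}^T a_t |t⟩⟨t|⊗I_d + Σ_{t=0}^{T−1} ( b_t |t+1⟩⟨t| ⊗ U_{t+1} + conj(b_t) |t⟩⟨t+1| ⊗ U_{t+1}^† ) and W := Σ_{t=0}^T |t⟩⟨t| ⊗ (U_t⋯U_1), where the empty product for t = 0 is I_d. Then W is unitary and W^† H_prop W = H_clock ⊗ I_d, where H_clock := Σ_{t=0}^T a_t |t⟩⟨t| + Σ_{t=0}^{T−1} ( b_t |t+1⟩⟨t| + conj(b_t) |t⟩⟨t+1| ) acts on ℂ^{T+1}. -/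
open Matrix Kronecker

/-- The ordered product `U_t ⋯ U_1` (the empty product for `t = 0` is the identity). -/
noncomputable def prodU (d : ℕ) (U : ℕ → Matrix (Fin d) (Fin d) ℂ) (t : ℕ) :
    Matrix (Fin d) (Fin d) ℂ :=
  ((List.range t).reverse.map (fun i => U (i + 1))).prod

/-- The modified Feynman propagation Hamiltonian on `ℂ^{T+1} ⊗ ℂ^d`. -/
noncomputable def Hprop (T d : ℕ) (U : ℕ → Matrix (Fin d) (Fin d) ℂ)
    (a : Fin (T + 1) → ℝ) (b : Fin T → ℂ) :
    Matrix (Fin (T + 1) × Fin d) (Fin (T + 1) × Fin d) ℂ :=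
  (∑ t : Fin (T + 1), (a t : ℂ) •
      (Matrix.single t t (1 : ℂ) ⊗ₖ (1 : Matrix (Fin d) (Fin d) ℂ)))
  + ∑ t : Fin T,
      (b t • (Matrix.single t.succ t.castSucc (1 : ℂ) ⊗ₖ U (t.val + 1))
        + (starRingEnd ℂ) (b t) •
            (Matrix.single t.castSucc t.succ (1 : ℂ) ⊗ₖ (U (t.val + 1))ᴴ))

/-- The clock Hamiltonian on `ℂ^{T+1}`. -/
noncomputable def Hclock (T : ℕ) (a : Fin (T + 1) → ℝ) (b : Fin T → ℂ) :
    Matrix (Fin (T + 1)) (Fin (T + 1)) ℂ :=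
  (∑ t : Fin (T + 1), (a t : ℂ) • Matrix.single t t (1 : ℂ))
  + ∑ t : Fin T,
      (b t • Matrix.single t.succ t.castSucc (1 : ℂ)
        + (starRingEnd ℂ) (b t) • Matrix.single t.castSucc t.succ (1 : ℂ))

/-- The history unitary `W = Σ_t |t⟩⟨t| ⊗ (U_t ⋯ U_1)`. -/
noncomputable def Wop (T d : ℕ) (U : ℕ → Matrix (Fin d) (Fin d) ℂ) :
    Matrix (Fin (T + 1) × Fin d) (Fin (T + 1) × Fin d) ℂ :=
  ∑ t : Fin (T + 1), Matrix.single t t (1 : ℂ) ⊗ₖ prodU d U t.val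

lemma prodU_zero (d : ℕ) (U : ℕ → Matrix (Fin d) (Fin d) ℂ) : prodU d U 0 = 1 := by
  simp [prodU]

lemma prodU_succ (d : ℕ) (U : ℕ → Matrix (Fin d) (Fin d) ℂ) (t : ℕ) :
    prodU d U (t + 1) = U (t + 1) * prodU d U t := by
  simp [prodU, List.range_succ]

lemma stdBasisMatrix_one_conjTranspose {n : ℕ} (i j : Fin n) :
    (Matrix.single i j (1 : ℂ))ᴴ = Matrix.single j i (1 : ℂ) := by
  ext a b
  simp [Matrix.conjTranspose_apply, Matrix.single, and_comm]

lemma sum_stdBasisMatrix_diag {n : ℕ} :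
    (∑ t : Fin n, Matrix.single t t (1 : ℂ)) = 1 := by
  ext i j
  simp only [Matrix.sum_apply, Matrix.single, Matrix.one_apply, Matrix.of_apply]
  rcases eq_or_ne i j with rfl | h
  · simp
  · simp [h, fun t => show ¬(t = i ∧ t = j) from fun ⟨h1, h2⟩ => h (h1 ▸ h2 ▸ rfl)]

lemma my_sum_kronecker {ι : Type*} {n d : ℕ} (s : Finset ι)
    (f : ι → Matrix (Fin n) (Fin n) ℂ) (B : Matrix (Fin d) (Fin d) ℂ) :
    (∑ i ∈ s, f i) ⊗ₖ B = ∑ i ∈ s, f i ⊗ₖ B := by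
  ext ⟨i, k⟩ ⟨j, l⟩
  simp [Matrix.sum_apply, Finset.sum_mul]

lemma my_kronecker_conjTranspose {n d : ℕ} (A : Matrix (Fin n) (Fin n) ℂ)
    (B : Matrix (Fin d) (Fin d) ℂ) : (A ⊗ₖ B)ᴴ = Aᴴ ⊗ₖ Bᴴ := by
  ext ⟨i, k⟩ ⟨j, l⟩
  simp [Matrix.conjTranspose_apply, mul_comm]

lemma key_left {n d : ℕ} (A : Fin n → Matrix (Fin d) (Fin d) ℂ) (s t : Fin n)
    (M : Matrix (Fin d) (Fin d) ℂ) :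
    (∑ r : Fin n, Matrix.single r r (1 : ℂ) ⊗ₖ A r)
        * (Matrix.single s t (1 : ℂ) ⊗ₖ M)
      = Matrix.single s t (1 : ℂ) ⊗ₖ (A s * M) := by
  rw [Finset.sum_mul]
  rw [Finset.sum_eq_single s]
  · rw [← Matrix.mul_kronecker_mul, Matrix.single_mul_single_same, one_mul]
  · intro r _ hr
    rw [← Matrix.mul_kronecker_mul, Matrix.single_mul_single_of_ne (c := (1:ℂ)) (d := (1:ℂ)) (h := hr),
      Matrix.zero_kronecker]
  · simp

lemma key_right {n d : ℕ} (A : Fin n → Matrix (Fin d) (Fin d) ℂ) (s t : Fin n)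
    (M : Matrix (Fin d) (Fin d) ℂ) :
    (Matrix.single s t (1 : ℂ) ⊗ₖ M)
        * (∑ r : Fin n, Matrix.single r r (1 : ℂ) ⊗ₖ A r)
      = Matrix.single s t (1 : ℂ) ⊗ₖ (M * A t) := by
  rw [Finset.mul_sum]
  rw [Finset.sum_eq_single t]
  · rw [← Matrix.mul_kronecker_mul, Matrix.single_mul_single_same, one_mul]
  · intro r _ hr
    rw [← Matrix.mul_kronecker_mul, Matrix.single_mul_single_of_ne (c := (1:ℂ)) (d := (1:ℂ)) (h := Ne.symm hr),
      Matrix.zero_kronecker]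
  · simp

theorem stmt0 (T d : ℕ) (hT : 1 ≤ T) (hd : 1 ≤ d)
    (U : ℕ → Matrix (Fin d) (Fin d) ℂ)
    (hU : ∀ i, 1 ≤ i → i ≤ T → U i ∈ Matrix.unitaryGroup (Fin d) ℂ)
    (a : Fin (T + 1) → ℝ) (b : Fin T → ℂ) :
    Wop T d U ∈ Matrix.unitaryGroup (Fin (T + 1) × Fin d) ℂ ∧
      (Wop T d U)ᴴ * Hprop T d U a b * Wop T d U
        = Hclock T a b ⊗ₖ (1 : Matrix (Fin d) (Fin d) ℂ) := by
  have hP : ∀ t, t ≤ T → prodU d U t ∈ Matrix.unitaryGroup (Fin d) ℂ := by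
    intro t
    induction t with
    | zero => intro _; rw [prodU_zero]; exact one_mem _
    | succ k ih =>
      intro hk
      rw [prodU_succ]
      exact mul_mem (hU (k+1) (Nat.succ_le_succ (Nat.zero_le _)) hk)
        (ih (Nat.le_of_succ_le hk))
  have hP1 : ∀ t, t ≤ T → (prodU d U t)ᴴ * prodU d U t = 1 := by
    intro t ht
    have := Matrix.mem_unitaryGroup_iff'.mp (hP t ht)
    rwa [Matrix.star_eq_conjTranspose] at this
  have hP2 : ∀ t, t ≤ T → prodU d U t * (prodU d U t)ᴴ = 1 := by
    intro t ht
    have := Matrix.mem_unitaryGroup_iff.mp (hP t ht)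
    rwa [Matrix.star_eq_conjTranspose] at this
  have hU1 : ∀ t : Fin T, (U (t.val + 1))ᴴ * U (t.val + 1) = 1 := by
    intro t
    have := Matrix.mem_unitaryGroup_iff'.mp
      (hU (t.val + 1) (Nat.succ_le_succ (Nat.zero_le _)) t.isLt)
    rwa [Matrix.star_eq_conjTranspose] at this
  have hle : ∀ t : Fin (T + 1), t.val ≤ T := fun t => Nat.lt_succ_iff.mp t.isLt
  have hWH : (Wop T d U)ᴴ
      = ∑ t : Fin (T + 1), Matrix.single t t (1 : ℂ) ⊗ₖ (prodU d U t.val)ᴴ := by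
    rw [Wop, Matrix.conjTranspose_sum]
    exact Finset.sum_congr rfl fun t _ => by
      rw [my_kronecker_conjTranspose, stdBasisMatrix_one_conjTranspose]
  have hconj : ∀ (s t : Fin (T + 1)) (M : Matrix (Fin d) (Fin d) ℂ),
      (Wop T d U)ᴴ * (Matrix.single s t (1 : ℂ) ⊗ₖ M) * Wop T d U
        = Matrix.single s t (1 : ℂ)
            ⊗ₖ ((prodU d U s.val)ᴴ * M * prodU d U t.val) := by
    intro s t M
    rw [hWH, Wop, key_left, key_right]
  constructor
  · rw [Matrix.mem_unitaryGroup_iff, Matrix.star_eq_conjTranspose, hWH, Wop, Finset.sum_mul]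
    calc ∑ t : Fin (T + 1), (Matrix.single t t (1 : ℂ) ⊗ₖ prodU d U t.val)
            * ∑ r : Fin (T + 1), Matrix.single r r (1 : ℂ) ⊗ₖ (prodU d U r.val)ᴴ
        = ∑ t : Fin (T + 1), Matrix.single t t (1 : ℂ)
            ⊗ₖ (prodU d U t.val * (prodU d U t.val)ᴴ) :=
          Finset.sum_congr rfl fun t _ => key_right _ t t _
      _ = ∑ t : Fin (T + 1), Matrix.single t t (1 : ℂ)
            ⊗ₖ (1 : Matrix (Fin d) (Fin d) ℂ) :=
          Finset.sum_congr rfl fun t _ => by rw [hP2 t.val (hle t)]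
      _ = (∑ t : Fin (T + 1), Matrix.single t t (1 : ℂ))
            ⊗ₖ (1 : Matrix (Fin d) (Fin d) ℂ) := (my_sum_kronecker _ _ _).symm
      _ = 1 := by rw [sum_stdBasisMatrix_diag, Matrix.one_kronecker_one]
  · have h1 : ∀ t : Fin (T + 1),
        (prodU d U t.val)ᴴ * (1 : Matrix (Fin d) (Fin d) ℂ) * prodU d U t.val = 1 := by
      intro t; rw [mul_one, hP1 t.val (hle t)]
    have h2 : ∀ t : Fin T,
        (prodU d U (Fin.succ t).val)ᴴ * U (t.val + 1) * prodU d U (Fin.castSucc t).val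
          = 1 := by
      intro t
      rw [Fin.val_succ, Fin.coe_castSucc, prodU_succ, Matrix.conjTranspose_mul,
        mul_assoc ((prodU d U t.val)ᴴ) ((U (t.val + 1))ᴴ) (U (t.val + 1)), hU1 t, mul_one,
        hP1 t.val (Nat.le_of_lt t.isLt)]
    have h3 : ∀ t : Fin T,
        (prodU d U (Fin.castSucc t).val)ᴴ * (U (t.val + 1))ᴴ * prodU d U (Fin.succ t).val
          = 1 := by
      intro t
      have hh : (U (t.val + 1))ᴴ * (U (t.val + 1) * prodU d U t.val) = prodU d U t.val := by
        rw [← mul_assoc, hU1 t, one_mul]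
      rw [Fin.val_succ, Fin.coe_castSucc, prodU_succ, mul_assoc, hh,
        hP1 t.val (Nat.le_of_lt t.isLt)]
    rw [Hprop, Hclock]
    simp only [Matrix.mul_add, Matrix.add_mul, Finset.mul_sum, Finset.sum_mul,
      Matrix.mul_smul, Matrix.smul_mul, hconj, h1, h2, h3,
      Matrix.add_kronecker, my_sum_kronecker, Matrix.smul_kronecker]
end

section
/- Let A and B be positive semidefinite Hermitian n×n complex matrices with ker A ≠ {0}, ker B ≠ {0}, and ker A ∩ ker B = {0}. Let m_A (respectively m_B) be the smallest nonzero eigenvalue of A (respectively B), and let c := max{ |⟨ξ, η⟩| : ξ ∈ ker A, η ∈ ker B, ‖ξ‖ = ‖η‖ = 1 }. Then for every ψ ∈ ℂ^n, ⟨ψ, (A+B)ψ⟩ ≥ min{m_A, m_B} · (1 − c) · ‖ψ‖². -/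
open Matrix ComplexOrder Finset

private lemma kitaev_dot_self_re {n : ℕ} (v : Fin n → ℂ) :
    (star v ⬝ᵥ v).re = ∑ i, Complex.normSq (v i) := by
  simp [dotProduct, Complex.re_sum, Complex.normSq_apply]

private lemma kitaev_dot_self_nonneg {n : ℕ} (v : Fin n → ℂ) : 0 ≤ (star v ⬝ᵥ v).re := by
  rw [kitaev_dot_self_re]; exact Finset.sum_nonneg fun i _ => Complex.normSq_nonneg _

private lemma kitaev_dot_self_coe {n : ℕ} (v : Fin n → ℂ) :
    star v ⬝ᵥ v = ((star v ⬝ᵥ v).re : ℂ) := by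
  have : star v ⬝ᵥ v = ((∑ i, Complex.normSq (v i) : ℝ) : ℂ) := by
    simp [dotProduct, Complex.normSq_eq_conj_mul_self]
  rw [this]; simp

private lemma kitaev_dot_self_pos {n : ℕ} (v : Fin n → ℂ) (hv : v ≠ 0) :
    0 < (star v ⬝ᵥ v).re := by
  rcases (kitaev_dot_self_nonneg v).lt_or_eq with h | h
  · exact h
  · exfalso; apply hv
    rw [kitaev_dot_self_re] at h
    funext i
    have := Finset.sum_eq_zero_iff_of_nonneg (fun i _ => Complex.normSq_nonneg (v i)) |>.1
      h.symm i (mem_univ i)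
    exact Complex.normSq_eq_zero.mp this

private lemma kitaev_inner_equiv_symm {n : ℕ} (x y : Fin n → ℂ) :
    inner ℂ ((WithLp.equiv 2 (Fin n → ℂ)).symm x) ((WithLp.equiv 2 (Fin n → ℂ)).symm y)
      = star x ⬝ᵥ y := by
  rw [dotProduct_comm]; rfl

private lemma kitaev_cs_re {n : ℕ} (u v : Fin n → ℂ) :
    (star u ⬝ᵥ v).re ^ 2 ≤ (star u ⬝ᵥ u).re * (star v ⬝ᵥ v).re := by
  have h := norm_inner_le_norm (𝕜 := ℂ) ((WithLp.equiv 2 (Fin n → ℂ)).symm u)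
    ((WithLp.equiv 2 (Fin n → ℂ)).symm v)
  rw [kitaev_inner_equiv_symm] at h
  have h2 : |(star u ⬝ᵥ v).re| ≤ ‖star u ⬝ᵥ v‖ := Complex.abs_re_le_norm _
  have h3 : (star u ⬝ᵥ v).re ^ 2 ≤
      (‖(WithLp.equiv 2 (Fin n → ℂ)).symm u‖ * ‖(WithLp.equiv 2 (Fin n → ℂ)).symm v‖) ^ 2 := by
    calc (star u ⬝ᵥ v).re ^ 2 = |(star u ⬝ᵥ v).re| ^ 2 := (sq_abs _).symm
    _ ≤ ‖star u ⬝ᵥ v‖ ^ 2 := by apply pow_le_pow_left₀ (abs_nonneg _) h2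
    _ ≤ _ := by apply pow_le_pow_left₀ (norm_nonneg _) h
  rw [mul_pow] at h3
  have e1 : ‖(WithLp.equiv 2 (Fin n → ℂ)).symm u‖ ^ 2 = (star u ⬝ᵥ u).re := by
    rw [← kitaev_inner_equiv_symm, ← inner_self_eq_norm_sq (𝕜 := ℂ)]; rfl
  have e2 : ‖(WithLp.equiv 2 (Fin n → ℂ)).symm v‖ ^ 2 = (star v ⬝ᵥ v).re := by
    rw [← kitaev_inner_equiv_symm, ← inner_self_eq_norm_sq (𝕜 := ℂ)]; rfl
  rw [e1, e2] at h3; exact h3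

private lemma kitaev_aux_spec {n : ℕ} {A : Matrix (Fin n) (Fin n) ℂ} (hA : A.PosSemidef) {m : ℝ}
    (hm : IsLeast {r : ℝ | (∃ i, hA.1.eigenvalues i = r) ∧ r ≠ 0} m) (ψ : Fin n → ℂ) :
    ∃ ξ : Fin n → ℂ, A.mulVec ξ = 0 ∧ star ξ ⬝ᵥ ψ = star ξ ⬝ᵥ ξ ∧
      (star ξ ⬝ᵥ ξ).re ≤ (star ψ ⬝ᵥ ψ).re ∧
      m * ((star ψ ⬝ᵥ ψ).re - (star ξ ⬝ᵥ ξ).re) ≤ (star ψ ⬝ᵥ A.mulVec ψ).re := by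
  classical
  set U : Matrix (Fin n) (Fin n) ℂ := (hA.1.eigenvectorUnitary : Matrix (Fin n) (Fin n) ℂ) with hU
  set ev := hA.1.eigenvalues with hev
  set D : Matrix (Fin n) (Fin n) ℂ := diagonal (RCLike.ofReal ∘ ev) with hD
  have hU1 : U * star U = 1 := Unitary.coe_mul_star_self _
  have hU2 : star U * U = 1 := Unitary.coe_star_mul_self _
  set a : Fin n → ℂ := star U *ᵥ ψ with ha
  set b : Fin n → ℂ := fun i => if ev i = 0 then a i else 0 with hb
  have hψ : ψ = U *ᵥ a := by rw [ha, mulVec_mulVec, hU1, one_mulVec]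
  have key : ∀ u v : Fin n → ℂ, star (U *ᵥ u) ⬝ᵥ (U *ᵥ v) = star u ⬝ᵥ v := by
    intro u v
    rw [star_mulVec, dotProduct_mulVec, vecMul_vecMul, ← Matrix.star_eq_conjTranspose, hU2,
      vecMul_one]
  have hDb : D *ᵥ b = 0 := by
    funext i
    simp only [hD, mulVec_diagonal, hb, Function.comp_apply, Pi.zero_apply]
    split_ifs with h
    · simp [h]
    · simp
  have hAUm : A * U = U * D := by
    conv_lhs => rw [hA.1.spectral_theorem]
    rw [Unitary.conjStarAlgAut_apply, mul_assoc, hU2, mul_one]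
  have hAU : ∀ v : Fin n → ℂ, A *ᵥ (U *ᵥ v) = U *ᵥ (D *ᵥ v) := by
    intro v
    rw [mulVec_mulVec, hAUm, ← mulVec_mulVec]
  have e1 : star (U *ᵥ b) ⬝ᵥ ψ = star b ⬝ᵥ a := by rw [hψ, key]
  have e2 : star (U *ᵥ b) ⬝ᵥ (U *ᵥ b) = star b ⬝ᵥ b := key b b
  have e3 : star ψ ⬝ᵥ ψ = star a ⬝ᵥ a := by rw [hψ, key]
  have e4 : star b ⬝ᵥ a = star b ⬝ᵥ b := by
    apply Finset.sum_congr rfl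
    intro i _
    simp only [hb, Pi.star_apply]
    split_ifs <;> simp
  have e5 : (star ψ ⬝ᵥ A.mulVec ψ).re = ∑ i, ev i * Complex.normSq (a i) := by
    have : star ψ ⬝ᵥ A.mulVec ψ = star a ⬝ᵥ (D *ᵥ a) := by
      rw [hψ, hAU, key]
    rw [this]
    rw [show star a ⬝ᵥ (D *ᵥ a) = ∑ i, ((ev i * Complex.normSq (a i) : ℝ) : ℂ) by
      apply Finset.sum_congr rfl
      intro i _
      simp only [hD, mulVec_diagonal, Function.comp_apply, Pi.star_apply,
        Complex.ofReal_mul, Complex.normSq_eq_conj_mul_self, Complex.star_def]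
      exact mul_left_comm (G := ℂ) _ _ _]
    rw [← Complex.ofReal_sum, Complex.ofReal_re]
  have hξre : (star (U *ᵥ b) ⬝ᵥ (U *ᵥ b)).re
      = ∑ i, (if ev i = 0 then Complex.normSq (a i) else 0) := by
    rw [e2, kitaev_dot_self_re]
    apply Finset.sum_congr rfl
    intro i _
    simp only [hb]
    split_ifs <;> simp
  have hψre : (star ψ ⬝ᵥ ψ).re = ∑ i, Complex.normSq (a i) := by rw [e3, kitaev_dot_self_re]
  refine ⟨U *ᵥ b, ?_, ?_, ?_, ?_⟩
  · rw [hAU, hDb, mulVec_zero]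
  · rw [e1, e2, e4]
  · rw [hξre, hψre]
    apply Finset.sum_le_sum
    intro i _
    split_ifs <;> [exact le_refl _; exact Complex.normSq_nonneg _]
  · rw [hξre, hψre, e5, ← Finset.sum_sub_distrib, Finset.mul_sum]
    apply Finset.sum_le_sum
    intro i _
    split_ifs with h
    · simp [h]
    · have hmle : m ≤ ev i := hm.2 ⟨⟨i, rfl⟩, h⟩
      have := Complex.normSq_nonneg (a i)
      nlinarith

set_option maxHeartbeats 1000000 in
/-- Kitaev's geometrical lemma. -/
theorem stmt1 (n : ℕ) (A B : Matrix (Fin n) (Fin n) ℂ)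
    (hA : A.PosSemidef) (hB : B.PosSemidef)
    (hkerA : ∃ ξ : Fin n → ℂ, ξ ≠ 0 ∧ A.mulVec ξ = 0)
    (hkerB : ∃ η : Fin n → ℂ, η ≠ 0 ∧ B.mulVec η = 0)
    (hcap : ∀ v : Fin n → ℂ, A.mulVec v = 0 → B.mulVec v = 0 → v = 0)
    (mA mB : ℝ)
    (hmA : IsLeast {r : ℝ | (∃ i, hA.1.eigenvalues i = r) ∧ r ≠ 0} mA)
    (hmB : IsLeast {r : ℝ | (∃ i, hB.1.eigenvalues i = r) ∧ r ≠ 0} mB)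
    (c : ℝ)
    (hc : IsGreatest {r : ℝ | ∃ ξ η : Fin n → ℂ,
        A.mulVec ξ = 0 ∧ B.mulVec η = 0 ∧
        star ξ ⬝ᵥ ξ = 1 ∧ star η ⬝ᵥ η = 1 ∧
        ‖star ξ ⬝ᵥ η‖ = r} c) :
    ∀ ψ : Fin n → ℂ,
      min mA mB * (1 - c) * (star ψ ⬝ᵥ ψ).re ≤ (star ψ ⬝ᵥ (A + B).mulVec ψ).re := by
  intro ψ
  obtain ⟨ξ, hAξ, hξψ, hξle, hξineq⟩ := kitaev_aux_spec hA hmA ψ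
  obtain ⟨η, hBη, hηψ, hηle, hηineq⟩ := kitaev_aux_spec hB hmB ψ
  set P := (star ψ ⬝ᵥ ψ).re with hP
  set x := (star ξ ⬝ᵥ ξ).re with hx
  set y := (star η ⬝ᵥ η).re with hy
  have hmA0 : 0 < mA := by
    obtain ⟨⟨i, hi⟩, hne⟩ := hmA.1
    have := hA.eigenvalues_nonneg i
    rw [hi] at this; exact lt_of_le_of_ne this (Ne.symm hne)
  have hmB0 : 0 < mB := by
    obtain ⟨⟨i, hi⟩, hne⟩ := hmB.1
    have := hB.eigenvalues_nonneg i
    rw [hi] at this; exact lt_of_le_of_ne this (Ne.symm hne)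
  have hc0 : 0 ≤ c := by
    obtain ⟨ξ', η', _, _, _, _, habs⟩ := hc.1
    rw [← habs]; exact norm_nonneg _
  have hP0 : 0 ≤ P := kitaev_dot_self_nonneg ψ
  have hx0 : 0 ≤ x := kitaev_dot_self_nonneg ξ
  have hy0 : 0 ≤ y := kitaev_dot_self_nonneg η
  -- bound on the cross term
  have hcross : ‖star ξ ⬝ᵥ η‖ ≤ c * (Real.sqrt x * Real.sqrt y) := by
    by_cases hξ0 : ξ = 0
    · rw [hξ0]
      simp only [star_zero, zero_dotProduct, norm_zero]
      positivity
    by_cases hη0 : η = 0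
    · rw [hη0]
      simp only [dotProduct_zero, norm_zero]
      positivity
    have hxpos : 0 < x := kitaev_dot_self_pos ξ hξ0
    have hypos : 0 < y := kitaev_dot_self_pos η hη0
    set rx : ℂ := (((Real.sqrt x)⁻¹ : ℝ) : ℂ) with hrx
    set ry : ℂ := (((Real.sqrt y)⁻¹ : ℝ) : ℂ) with hry
    have hnorm : ∀ (v : Fin n → ℂ) (t : ℝ) (ht : 0 < t), star v ⬝ᵥ v = (t : ℂ) →
        star (((((Real.sqrt t)⁻¹ : ℝ) : ℂ)) • v) ⬝ᵥ (((((Real.sqrt t)⁻¹ : ℝ) : ℂ)) • v) = 1 := by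
      intro v t ht hvd
      rw [star_smul, smul_dotProduct, dotProduct_smul, hvd]
      simp only [smul_eq_mul, RCLike.star_def, Complex.conj_ofReal]
      rw [← Complex.ofReal_mul, ← Complex.ofReal_mul]
      norm_cast
      rw [← mul_assoc, ← mul_inv, Real.mul_self_sqrt ht.le]
      exact inv_mul_cancel₀ ht.ne'
    have hmem : ‖star (rx • ξ) ⬝ᵥ (ry • η)‖ ≤ c := by
      apply hc.2
      refine ⟨rx • ξ, ry • η, ?_, ?_, ?_, ?_, rfl⟩
      · rw [mulVec_smul, hAξ, smul_zero]
      · rw [mulVec_smul, hBη, smul_zero]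
      · exact hnorm ξ x hxpos (by rw [← hξψ, hξψ, kitaev_dot_self_coe])
      · exact hnorm η y hypos (by rw [kitaev_dot_self_coe])
    have hval : star (rx • ξ) ⬝ᵥ (ry • η) = rx * ry * (star ξ ⬝ᵥ η) := by
      rw [star_smul, smul_dotProduct, dotProduct_smul]
      simp only [smul_eq_mul, RCLike.star_def, Complex.conj_ofReal, hrx]
      ring
    rw [hval] at hmem
    rw [hrx, hry] at hmem
    rw [norm_mul, norm_mul, Complex.norm_real, Complex.norm_real, Real.norm_eq_abs, Real.norm_eq_abs,
      abs_of_nonneg (by positivity), abs_of_nonneg (by positivity)] at hmem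
    have hsx : 0 < Real.sqrt x := Real.sqrt_pos.2 hxpos
    have hsy : 0 < Real.sqrt y := Real.sqrt_pos.2 hypos
    have := mul_le_mul_of_nonneg_left hmem (by positivity : (0:ℝ) ≤ Real.sqrt x * Real.sqrt y)
    calc ‖star ξ ⬝ᵥ η‖
        = (Real.sqrt x * Real.sqrt y) * ((Real.sqrt x)⁻¹ * (Real.sqrt y)⁻¹
            * ‖star ξ ⬝ᵥ η‖) := by
          field_simp
    _ ≤ (Real.sqrt x * Real.sqrt y) * c := this
    _ = c * (Real.sqrt x * Real.sqrt y) := by ring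
  -- key geometric inequality : x + y ≤ (1 + c) * P
  have hsum : x + y ≤ (1 + c) * P := by
    have hψξ : star ψ ⬝ᵥ ξ = (x : ℂ) := by
      rw [star_dotProduct, hξψ, kitaev_dot_self_coe, ← hx, Complex.star_def,
        Complex.conj_ofReal]
    have hψη : star ψ ⬝ᵥ η = (y : ℂ) := by
      rw [star_dotProduct, hηψ, kitaev_dot_self_coe, ← hy, Complex.star_def,
        Complex.conj_ofReal]
    have h1 : (star ψ ⬝ᵥ (ξ + η)).re = x + y := by
      rw [dotProduct_add, hψξ, hψη, ← Complex.ofReal_add, Complex.ofReal_re]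
    have h2 : (star (ξ + η) ⬝ᵥ (ξ + η)).re = x + y + 2 * (star ξ ⬝ᵥ η).re := by
      have hηξ : star η ⬝ᵥ ξ = star (star ξ ⬝ᵥ η) := star_dotProduct _ _
      rw [star_add, add_dotProduct, dotProduct_add, dotProduct_add, hηξ]
      simp only [Complex.add_re]
      have : (star (star ξ ⬝ᵥ η)).re = (star ξ ⬝ᵥ η).re := by
        rw [Complex.star_def, Complex.conj_re]
      rw [this]; ring
    have hre_le : (star ξ ⬝ᵥ η).re ≤ c * (Real.sqrt x * Real.sqrt y) :=
      le_trans (Complex.re_le_norm _) hcross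
    have hsqrt : 2 * (Real.sqrt x * Real.sqrt y) ≤ x + y := by
      nlinarith [sq_nonneg (Real.sqrt x - Real.sqrt y), Real.sq_sqrt hx0, Real.sq_sqrt hy0]
    have hcs := kitaev_cs_re ψ (ξ + η)
    rw [h1, h2] at hcs
    have hbound : (x + y) ^ 2 ≤ P * ((1 + c) * (x + y)) := by
      have hsq0 : 0 ≤ Real.sqrt x * Real.sqrt y := by positivity
      nlinarith [mul_le_mul_of_nonneg_left hre_le hP0,
        mul_le_mul_of_nonneg_left hsqrt (mul_nonneg hP0 hc0)]
    rcases eq_or_lt_of_le (by linarith : (0:ℝ) ≤ x + y) with h0 | h0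
    · rw [← h0]; positivity
    · nlinarith
  -- conclusion
  have hsplit : (star ψ ⬝ᵥ (A + B).mulVec ψ).re
      = (star ψ ⬝ᵥ A.mulVec ψ).re + (star ψ ⬝ᵥ B.mulVec ψ).re := by
    rw [add_mulVec, dotProduct_add, Complex.add_re]
  rw [hsplit]
  have hminA : min mA mB ≤ mA := min_le_left _ _
  have hminB : min mA mB ≤ mB := min_le_right _ _
  have hmin0 : 0 < min mA mB := lt_min hmA0 hmB0
  have t1 : min mA mB * (P - x) ≤ mA * (P - x) :=
    mul_le_mul_of_nonneg_right hminA (by linarith)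
  have t2 : min mA mB * (P - y) ≤ mB * (P - y) :=
    mul_le_mul_of_nonneg_right hminB (by linarith)
  nlinarith [mul_le_mul_of_nonneg_left hsum hmin0.le]
end

section
/- Let T ≥ 1 and d ≥ 1, let U_1,…,U_T be unitary d×d complex matrices and U := U_T⋯U_1, let Π_in and Π_out be orthogonal projections on ℂ^d, and let 0 ≤ ε ≤ 1 be such that |⟨η, Uξ⟩|² ≤ ε for all unit vectors ξ ∈ ker Π_in and η ∈ ker Π_out. Let ψ ∈ ℂ^{T+1} be a unit vector and define the projection Π_pen := |0⟩⟨0|⊗(I_d−Π_in) + |T⟩⟨T|⊗(I_d−Π_out) + Σ_{t=1}^{T−1} |t⟩⟨t|⊗I_d on ℂ^{T+1}⊗ℂ^d. Then for every unit vector ξ ∈ ℂ^d, the history state η := Σ_{t=0}^T ψ_t |t⟩⊗(U_t⋯U_1)ξ (where the empty product for t = 0 is I_d) is a unit vector satisfying ⟨η, Π_pen η⟩ ≤ 1 − min{|ψ_0|², |ψ_T|²}·(1 − √ε). -/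
open Matrix Kronecker

/-- The history state `Σ_t ψ_t |t⟩ ⊗ (U_t ⋯ U_1) ξ`. -/
noncomputable def historyState (T d : ℕ) (U : ℕ → Matrix (Fin d) (Fin d) ℂ)
    (ψ : Fin (T + 1) → ℂ) (ξ : Fin d → ℂ) : Fin (T + 1) × Fin d → ℂ :=
  fun p => ψ p.1 * (prodU d U p.1.val).mulVec ξ p.2

/-- The projection onto the kernel of the penalty Hamiltonian,
`Π_pen = |0⟩⟨0|⊗(1−Π_in) + |T⟩⟨T|⊗(1−Π_out) + Σ_{0<t<T} |t⟩⟨t|⊗1`. -/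
noncomputable def PiPen (T d : ℕ) (Pin Pout : Matrix (Fin d) (Fin d) ℂ) :
    Matrix (Fin (T + 1) × Fin d) (Fin (T + 1) × Fin d) ℂ :=
  Matrix.single (0 : Fin (T + 1)) (0 : Fin (T + 1)) (1 : ℂ) ⊗ₖ (1 - Pin)
  + Matrix.single (Fin.last T) (Fin.last T) (1 : ℂ) ⊗ₖ (1 - Pout)
  + ∑ t ∈ Finset.univ.filter (fun t : Fin (T + 1) => t ≠ 0 ∧ t ≠ Fin.last T),
      Matrix.single t t (1 : ℂ) ⊗ₖ (1 : Matrix (Fin d) (Fin d) ℂ)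

/-! ### Auxiliary lemmas -/

/-- Squared Euclidean norm of a complex vector. -/
noncomputable def nsqV {n : Type*} [Fintype n] (x : n → ℂ) : ℝ := ∑ i, Complex.normSq (x i)

lemma nsqV_nonneg {n : Type*} [Fintype n] (x : n → ℂ) : 0 ≤ nsqV x :=
  Finset.sum_nonneg fun _ _ => Complex.normSq_nonneg _

lemma nsqV_pos {n : Type*} [Fintype n] {x : n → ℂ} (hx : x ≠ 0) : 0 < nsqV x := by
  rcases Function.ne_iff.mp hx with ⟨i, hi⟩
  have : (0:ℝ) < Complex.normSq (x i) := Complex.normSq_pos.mpr hi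
  exact lt_of_lt_of_le this (Finset.single_le_sum (f := fun j => Complex.normSq (x j))
    (fun _ _ => Complex.normSq_nonneg _) (Finset.mem_univ i))

lemma dp_self {n : Type*} [Fintype n] (x : n → ℂ) : star x ⬝ᵥ x = ((nsqV x : ℝ) : ℂ) := by
  simp [dotProduct, nsqV, Complex.normSq_eq_conj_mul_self, Complex.star_def]

lemma dp_star_comm {n : Type*} [Fintype n] (x y : n → ℂ) :
    star x ⬝ᵥ y = (starRingEnd ℂ) (star y ⬝ᵥ x) := by
  simp [dotProduct, Complex.star_def, map_sum, mul_comm]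

/-- Cauchy–Schwarz for the complex dot product. -/
lemma dp_abs_le {n : Type*} [Fintype n] (x y : n → ℂ) :
    ‖star x ⬝ᵥ y‖ ≤ Real.sqrt (nsqV x) * Real.sqrt (nsqV y) := by
  set X : EuclideanSpace ℂ n := (WithLp.equiv 2 (n → ℂ)).symm x
  set Y : EuclideanSpace ℂ n := (WithLp.equiv 2 (n → ℂ)).symm y
  have hinner : (inner ℂ X Y : ℂ) = star x ⬝ᵥ y := by
    simp [X, Y, PiLp.inner_apply, dotProduct, RCLike.inner_apply, Complex.star_def, mul_comm]
  have hnx : ‖X‖ = Real.sqrt (nsqV x) := by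
    rw [EuclideanSpace.norm_eq]
    congr 1
    refine Finset.sum_congr rfl fun i _ => ?_
    simp [X, Complex.sq_norm]
  have hny : ‖Y‖ = Real.sqrt (nsqV y) := by
    rw [EuclideanSpace.norm_eq]
    congr 1
    refine Finset.sum_congr rfl fun i _ => ?_
    simp [Y, Complex.sq_norm]
  have := norm_inner_le_norm (𝕜 := ℂ) X Y
  rwa [hinner, hnx, hny] at this

lemma dp_unitary {n : Type*} [Fintype n] [DecidableEq n] {W : Matrix n n ℂ}
    (hW : Wᴴ * W = 1) (x y : n → ℂ) :
    star (W *ᵥ x) ⬝ᵥ (W *ᵥ y) = star x ⬝ᵥ y := by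
  rw [star_mulVec, dotProduct_mulVec, vecMul_vecMul, hW, vecMul_one]

lemma dp_herm_move {n : Type*} [Fintype n] {P : Matrix n n ℂ} (hP : P.IsHermitian)
    (x z : n → ℂ) : star (P *ᵥ x) ⬝ᵥ z = star x ⬝ᵥ (P *ᵥ z) := by
  rw [star_mulVec, hP.eq, dotProduct_mulVec]

lemma prodU_unitary (d T : ℕ) (U : ℕ → Matrix (Fin d) (Fin d) ℂ)
    (hU : ∀ i, 1 ≤ i → i ≤ T → U i ∈ Matrix.unitaryGroup (Fin d) ℂ)
    (t : ℕ) (ht : t ≤ T) : (prodU d U t)ᴴ * prodU d U t = 1 := by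
  induction t with
  | zero => simp [prodU]
  | succ k ih =>
      have hk : (prodU d U k)ᴴ * prodU d U k = 1 := ih (le_trans (Nat.le_succ k) ht)
      have hUk : (U (k+1))ᴴ * U (k+1) = 1 := by
        have := Matrix.mem_unitaryGroup_iff'.mp (hU (k+1) (Nat.succ_le_succ (Nat.zero_le k)) ht)
        simpa [Matrix.star_eq_conjTranspose] using this
      rw [prodU_succ, conjTranspose_mul, Matrix.mul_assoc, ← Matrix.mul_assoc (U (k+1))ᴴ, hUk,
        Matrix.one_mul, hk]

lemma sum_mulVec' {n : Type*} [Fintype n] {ι : Type*} (s : Finset ι)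
    (M : ι → Matrix n n ℂ) (x : n → ℂ) : (∑ t ∈ s, M t) *ᵥ x = ∑ t ∈ s, M t *ᵥ x := by
  ext i
  simp only [mulVec, dotProduct, Finset.sum_apply, Matrix.sum_apply, Finset.sum_mul]
  rw [Finset.sum_comm]

lemma dp_sum' {n : Type*} [Fintype n] {ι : Type*} (s : Finset ι)
    (v : n → ℂ) (x : ι → n → ℂ) : v ⬝ᵥ (∑ t ∈ s, x t) = ∑ t ∈ s, v ⬝ᵥ x t := by
  simp only [dotProduct, Finset.sum_apply, Finset.mul_sum]
  rw [Finset.sum_comm]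

lemma qf_single (T d : ℕ) (U : ℕ → Matrix (Fin d) (Fin d) ℂ) (ψ : Fin (T+1) → ℂ) (ξ : Fin d → ℂ)
    (r : Fin (T+1)) (B : Matrix (Fin d) (Fin d) ℂ) :
    star (historyState T d U ψ ξ) ⬝ᵥ ((Matrix.single r r (1:ℂ) ⊗ₖ B) *ᵥ historyState T d U ψ ξ)
      = (starRingEnd ℂ) (ψ r) * ψ r * (star ((prodU d U r.val).mulVec ξ) ⬝ᵥ B *ᵥ ((prodU d U r.val).mulVec ξ)) := by
  have expand : ∀ p : Fin (T+1) × Fin d,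
      ((Matrix.single r r (1:ℂ) ⊗ₖ B) *ᵥ historyState T d U ψ ξ) p
        = if p.1 = r then ψ r * (B *ᵥ ((prodU d U r.val).mulVec ξ)) p.2 else 0 := by
    rintro ⟨s, i⟩
    rcases eq_or_ne s r with rfl | hs
    · simp only [mulVec, dotProduct, Fintype.sum_prod_type, kroneckerMap_apply,
        single, of_apply, historyState, if_pos rfl, ite_and, ite_mul, one_mul, zero_mul,
        Finset.sum_ite_irrel, Finset.sum_const_zero, Finset.sum_ite_eq, Finset.mem_univ, if_true]
      rw [Finset.mul_sum]
      exact Finset.sum_congr rfl fun j _ => by ring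
    · simp only [mulVec, dotProduct, Fintype.sum_prod_type, kroneckerMap_apply,
        single, of_apply, historyState, ite_and, ite_mul, one_mul, zero_mul,
        Finset.sum_ite_irrel, Finset.sum_const_zero, Finset.sum_ite_eq, Finset.mem_univ,
        if_true]
      simp [hs, Ne.symm hs]
  simp only [dotProduct, expand, Fintype.sum_prod_type, Pi.star_apply, mul_ite, mul_zero,
    Finset.sum_ite_irrel, Finset.sum_const_zero, Finset.sum_ite_eq', Finset.mem_univ, if_true,
    historyState, star_mul']
  rw [Finset.mul_sum]
  exact Finset.sum_congr rfl fun j _ => by simp only [Complex.star_def]; ring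

set_option maxHeartbeats 2000000 in
theorem stmt2 (T d : ℕ) (hT : 1 ≤ T) (hd : 1 ≤ d)
    (U : ℕ → Matrix (Fin d) (Fin d) ℂ)
    (hU : ∀ i, 1 ≤ i → i ≤ T → U i ∈ Matrix.unitaryGroup (Fin d) ℂ)
    (Pin Pout : Matrix (Fin d) (Fin d) ℂ)
    (hPin : Pin.IsHermitian) (hPin2 : Pin * Pin = Pin)
    (hPout : Pout.IsHermitian) (hPout2 : Pout * Pout = Pout)
    (ε : ℝ) (hε0 : 0 ≤ ε) (hε1 : ε ≤ 1)
    (hacc : ∀ ξ η : Fin d → ℂ, Pin.mulVec ξ = 0 → Pout.mulVec η = 0 →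
      star ξ ⬝ᵥ ξ = 1 → star η ⬝ᵥ η = 1 →
      ‖star η ⬝ᵥ (prodU d U T).mulVec ξ‖ ^ 2 ≤ ε)
    (ψ : Fin (T + 1) → ℂ) (hψ : star ψ ⬝ᵥ ψ = 1)
    (ξ : Fin d → ℂ) (hξ : star ξ ⬝ᵥ ξ = 1) :
    star (historyState T d U ψ ξ) ⬝ᵥ historyState T d U ψ ξ = 1 ∧
    (star (historyState T d U ψ ξ) ⬝ᵥ
        (PiPen T d Pin Pout).mulVec (historyState T d U ψ ξ)).re
      ≤ 1 - min (‖ψ 0‖ ^ 2) (‖ψ (Fin.last T)‖ ^ 2)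
          * (1 - Real.sqrt ε) := by
  -- abbreviations
  set W := prodU d U T with hWdef
  have hWt : ∀ t : Fin (T+1), (prodU d U t.val)ᴴ * prodU d U t.val = 1 :=
    fun t => prodU_unitary d T U hU t.val (Nat.lt_succ_iff.mp t.isLt)
  have dpWt : ∀ (t : Fin (T+1)) (x y : Fin d → ℂ),
      star ((prodU d U t.val) *ᵥ x) ⬝ᵥ ((prodU d U t.val) *ᵥ y) = star x ⬝ᵥ y :=
    fun t x y => dp_unitary (hWt t) x y
  have hW : Wᴴ * W = 1 := prodU_unitary d T U hU T le_rfl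
  have dpW : ∀ x y : Fin d → ℂ, star (W *ᵥ x) ⬝ᵥ (W *ᵥ y) = star x ⬝ᵥ y :=
    fun x y => dp_unitary hW x y
  -- Part 1: the history state is a unit vector
  have hnorm : star (historyState T d U ψ ξ) ⬝ᵥ historyState T d U ψ ξ = 1 := by
    have h1 : star (historyState T d U ψ ξ) ⬝ᵥ historyState T d U ψ ξ
        = ∑ t : Fin (T+1), (starRingEnd ℂ) (ψ t) * ψ t
            * (star ((prodU d U t.val) *ᵥ ξ) ⬝ᵥ ((prodU d U t.val) *ᵥ ξ)) := by
      simp only [dotProduct, Fintype.sum_prod_type, historyState, Pi.star_apply, star_mul',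
        Complex.star_def, Finset.mul_sum]
      exact Finset.sum_congr rfl fun t _ => Finset.sum_congr rfl fun i _ => by ring
    rw [h1]
    have h2 : ∀ t : Fin (T+1),
        (starRingEnd ℂ) (ψ t) * ψ t * (star ((prodU d U t.val) *ᵥ ξ) ⬝ᵥ ((prodU d U t.val) *ᵥ ξ))
          = (starRingEnd ℂ) (ψ t) * ψ t := by
      intro t; rw [dpWt t ξ ξ, hξ, mul_one]
    rw [Finset.sum_congr rfl fun t _ => h2 t]
    simpa [dotProduct, Complex.star_def] using hψ
  refine ⟨hnorm, ?_⟩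
  -- setup for the geometric inequality
  set y := W *ᵥ ξ with hydef
  have hy1 : star y ⬝ᵥ y = 1 := by rw [hydef, dpW, hξ]
  set a := nsqV (Pin *ᵥ ξ) with hadef
  set b := nsqV (Pout *ᵥ y) with hbdef
  set u := ξ - Pin *ᵥ ξ with hudef
  set v := y - Pout *ᵥ y with hvdef
  set mu := nsqV u with hmudef
  set mv := nsqV v with hmvdef
  have ha0 : 0 ≤ a := nsqV_nonneg _
  have hb0 : 0 ≤ b := nsqV_nonneg _
  have hmu0 : 0 ≤ mu := nsqV_nonneg _
  have hmv0 : 0 ≤ mv := nsqV_nonneg _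
  set s := Real.sqrt ε with hsdef
  have hs0 : 0 ≤ s := Real.sqrt_nonneg ε
  have hPu : Pin *ᵥ u = 0 := by
    rw [hudef, mulVec_sub, mulVec_mulVec ξ Pin Pin, hPin2, sub_self]
  have hPv : Pout *ᵥ v = 0 := by
    rw [hvdef, mulVec_sub, mulVec_mulVec y Pout Pout, hPout2, sub_self]
  have hudec : Pin *ᵥ ξ + u = ξ := by rw [hudef]; abel
  have hvdec : Pout *ᵥ y + v = y := by rw [hvdef]; abel
  have ortho1 : star (Pin *ᵥ ξ) ⬝ᵥ u = 0 := by
    rw [dp_herm_move hPin, hPu, dotProduct_zero]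
  have ortho1' : star u ⬝ᵥ (Pin *ᵥ ξ) = 0 := by rw [dp_star_comm, ortho1, map_zero]
  have ortho2 : star (Pout *ᵥ y) ⬝ᵥ v = 0 := by
    rw [dp_herm_move hPout, hPv, dotProduct_zero]
  have ortho2' : star v ⬝ᵥ (Pout *ᵥ y) = 0 := by rw [dp_star_comm, ortho2, map_zero]
  have hamu : a + mu = 1 := by
    have hc : ((a + mu : ℝ) : ℂ) = 1 := by
      push_cast
      rw [← dp_self, ← dp_self]
      calc star (Pin *ᵥ ξ) ⬝ᵥ (Pin *ᵥ ξ) + star u ⬝ᵥ u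
          = star (Pin *ᵥ ξ + u) ⬝ᵥ (Pin *ᵥ ξ + u) := by
            rw [star_add, add_dotProduct, dotProduct_add, dotProduct_add, ortho1, ortho1']
            try ring
        _ = 1 := by rw [hudec, hξ]
    exact_mod_cast hc
  have hbmv : b + mv = 1 := by
    have hc : ((b + mv : ℝ) : ℂ) = 1 := by
      push_cast
      rw [← dp_self, ← dp_self]
      calc star (Pout *ᵥ y) ⬝ᵥ (Pout *ᵥ y) + star v ⬝ᵥ v
          = star (Pout *ᵥ y + v) ⬝ᵥ (Pout *ᵥ y + v) := by
            rw [star_add, add_dotProduct, dotProduct_add, dotProduct_add, ortho2, ortho2']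
            try ring
        _ = 1 := by rw [hvdec, hy1]
    exact_mod_cast hc
  -- the cross-term bound from hacc
  have habsuv : ‖star (W *ᵥ u) ⬝ᵥ v‖ ≤ s * (Real.sqrt mu * Real.sqrt mv) := by
    by_cases hu0 : u = 0
    · simp only [hu0, mulVec_zero, star_zero, zero_dotProduct, map_zero, norm_zero]
      positivity
    by_cases hv0 : v = 0
    · simp only [hv0, dotProduct_zero, map_zero, norm_zero]
      positivity
    · have hmup : 0 < mu := nsqV_pos hu0
      have hmvp : 0 < mv := nsqV_pos hv0
      have hsu : 0 < Real.sqrt mu := Real.sqrt_pos.mpr hmup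
      have hsv : 0 < Real.sqrt mv := Real.sqrt_pos.mpr hmvp
      set cu : ℂ := (((Real.sqrt mu)⁻¹ : ℝ) : ℂ) with hcudef
      set cv : ℂ := (((Real.sqrt mv)⁻¹ : ℝ) : ℂ) with hcvdef
      have h1 : Pin *ᵥ (cu • u) = 0 := by rw [mulVec_smul, hPu, smul_zero]
      have h2 : Pout *ᵥ (cv • v) = 0 := by rw [mulVec_smul, hPv, smul_zero]
      have hnum : (Real.sqrt mu)⁻¹ * ((Real.sqrt mu)⁻¹ * mu) = 1 := by
        have h := Real.mul_self_sqrt hmu0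
        field_simp
        rw [Real.sq_sqrt hmu0]
      have hnvm : (Real.sqrt mv)⁻¹ * ((Real.sqrt mv)⁻¹ * mv) = 1 := by
        have h := Real.mul_self_sqrt hmv0
        field_simp
        rw [Real.sq_sqrt hmv0]
      have h3 : star (cu • u) ⬝ᵥ (cu • u) = 1 := by
        rw [star_smul, smul_dotProduct, dotProduct_smul, dp_self]
        rw [hcudef]
        simp only [smul_eq_mul, Complex.star_def, Complex.conj_ofReal]
        exact_mod_cast congrArg (fun r : ℝ => (r : ℂ)) hnum
      have h4 : star (cv • v) ⬝ᵥ (cv • v) = 1 := by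
        rw [star_smul, smul_dotProduct, dotProduct_smul, dp_self]
        rw [hcvdef]
        simp only [smul_eq_mul, Complex.star_def, Complex.conj_ofReal]
        exact_mod_cast congrArg (fun r : ℝ => (r : ℂ)) hnvm
      have h5 := hacc (cu • u) (cv • v) h1 h2 h3 h4
      have h6 : star (cv • v) ⬝ᵥ (W *ᵥ (cu • u)) = cv * cu * (star v ⬝ᵥ (W *ᵥ u)) := by
        rw [mulVec_smul, star_smul, smul_dotProduct, dotProduct_smul]
        simp only [smul_eq_mul, Complex.star_def, hcvdef, Complex.conj_ofReal]
        ring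
      rw [h6] at h5
      have h7 : ‖star v ⬝ᵥ (W *ᵥ u)‖ = ‖star (W *ᵥ u) ⬝ᵥ v‖ := by
        rw [dp_star_comm]
        exact Complex.norm_conj _
      set X := ‖star (W *ᵥ u) ⬝ᵥ v‖ with hXdef
      have hX0 : 0 ≤ X := norm_nonneg _
      have h8 : ‖cv * cu * (star v ⬝ᵥ (W *ᵥ u))‖
          = (Real.sqrt mv)⁻¹ * (Real.sqrt mu)⁻¹ * X := by
        rw [norm_mul, norm_mul, h7, hcudef, hcvdef, Complex.norm_real, Complex.norm_real, Real.norm_eq_abs, Real.norm_eq_abs,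
          abs_of_nonneg (by positivity), abs_of_nonneg (by positivity)]
      rw [h8] at h5
      have h9 : (Real.sqrt mv)⁻¹ * (Real.sqrt mu)⁻¹ * X ≤ s := by
        rw [hsdef]
        exact (Real.le_sqrt (by positivity) hε0).mpr h5
      calc X = (Real.sqrt mu * Real.sqrt mv) * ((Real.sqrt mv)⁻¹ * (Real.sqrt mu)⁻¹ * X) := by
              field_simp
        _ ≤ (Real.sqrt mu * Real.sqrt mv) * s := by
              exact mul_le_mul_of_nonneg_left h9 (by positivity)
        _ = s * (Real.sqrt mu * Real.sqrt mv) := by ring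
  -- the key inequality  mu + mv ≤ 1 + s
  have e1 : star y ⬝ᵥ (W *ᵥ u) = ((mu : ℝ) : ℂ) := by
    rw [hydef, dpW, ← dp_self]
    conv_lhs => rw [← hudec]
    rw [star_add, add_dotProduct, ortho1, zero_add]
  have e2 : star y ⬝ᵥ v = ((mv : ℝ) : ℂ) := by
    rw [← dp_self]
    conv_lhs => rw [← hvdec]
    rw [star_add, add_dotProduct, ortho2, zero_add]
  have hm1 : star y ⬝ᵥ (W *ᵥ u + v) = (((mu + mv) : ℝ) : ℂ) := by
    rw [dotProduct_add, e1, e2]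
    push_cast
    ring
  have hkey : mu + mv ≤ 1 + s := by
    have hm0 : 0 ≤ mu + mv := add_nonneg hmu0 hmv0
    have h2 : mu + mv ≤ ‖star y ⬝ᵥ (W *ᵥ u + v)‖ := by
      rw [hm1, Complex.norm_real, Real.norm_eq_abs]
      exact le_abs_self _
    have hny : nsqV y = 1 := by
      have hds := dp_self y
      rw [hy1] at hds
      exact_mod_cast hds.symm
    have h3 : ‖star y ⬝ᵥ (W *ᵥ u + v)‖ ≤ Real.sqrt (nsqV (W *ᵥ u + v)) := by
      have hcs := dp_abs_le y (W *ᵥ u + v)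
      rwa [hny, Real.sqrt_one, one_mul] at hcs
    have expand : ((nsqV (W *ᵥ u + v) : ℝ) : ℂ)
        = ((mu : ℝ) : ℂ) + ((mv : ℝ) : ℂ)
          + (((2 * (star (W *ᵥ u) ⬝ᵥ v).re : ℝ)) : ℂ) := by
      rw [← dp_self, star_add, add_dotProduct, dotProduct_add, dotProduct_add]
      rw [dpW u u, dp_self u, dp_self v]
      rw [dp_star_comm v (W *ᵥ u), ← Complex.add_conj]
      ring
    have hre : nsqV (W *ᵥ u + v) = mu + mv + 2 * (star (W *ᵥ u) ⬝ᵥ v).re := by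
      exact_mod_cast expand
    clear_value mu mv s
    have hzre : (star (W *ᵥ u) ⬝ᵥ v).re ≤ s * (Real.sqrt mu * Real.sqrt mv) :=
      le_trans (Complex.re_le_norm _) habsuv
    have hgm : 2 * (Real.sqrt mu * Real.sqrt mv) ≤ mu + mv := by
      nlinarith [Real.sq_sqrt hmu0, Real.sq_sqrt hmv0,
        sq_nonneg (Real.sqrt mu - Real.sqrt mv)]
    have h4 : nsqV (W *ᵥ u + v) ≤ (mu + mv) + s * (mu + mv) := by
      rw [hre]
      have h41 : 2 * (star (W *ᵥ u) ⬝ᵥ v).re ≤ 2 * (s * (Real.sqrt mu * Real.sqrt mv)) := by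
        linarith
      have h42 : 2 * (s * (Real.sqrt mu * Real.sqrt mv)) = s * (2 * (Real.sqrt mu * Real.sqrt mv)) := by
        ring
      have h43 : s * (2 * (Real.sqrt mu * Real.sqrt mv)) ≤ s * (mu + mv) :=
        mul_le_mul_of_nonneg_left hgm hs0
      linarith
    have h5 : mu + mv ≤ Real.sqrt ((mu + mv) + s * (mu + mv)) :=
      le_trans h2 (le_trans h3 (Real.sqrt_le_sqrt h4))
    have h6 : (mu + mv) ^ 2 ≤ (mu + mv) + s * (mu + mv) :=
      (Real.le_sqrt hm0 (by nlinarith)).mp h5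
    rcases hm0.eq_or_lt with h | h
    · linarith
    · nlinarith [h6, h]
  have key : 1 - s ≤ a + b := by linarith
  -- the quadratic form computation
  have h00 : prodU d U ((0 : Fin (T+1)) : ℕ) = 1 := by
    simp [prodU]
  have hlastW : prodU d U ((Fin.last T : Fin (T+1)) : ℕ) = W := by
    rw [Fin.val_last]
  have hdpa : star ξ ⬝ᵥ (Pin *ᵥ ξ) = ((a : ℝ) : ℂ) := by
    have hmv : star (Pin *ᵥ ξ) ⬝ᵥ (Pin *ᵥ ξ) = star ξ ⬝ᵥ (Pin *ᵥ ξ) := by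
      rw [dp_herm_move hPin, mulVec_mulVec ξ Pin Pin, hPin2]
    rw [← hmv, dp_self, hadef]
  have hdpb : star y ⬝ᵥ (Pout *ᵥ y) = ((b : ℝ) : ℂ) := by
    have hmv : star (Pout *ᵥ y) ⬝ᵥ (Pout *ᵥ y) = star y ⬝ᵥ (Pout *ᵥ y) := by
      rw [dp_herm_move hPout, mulVec_mulVec y Pout Pout, hPout2]
    rw [← hmv, dp_self, hbdef]
  have hterm0 : star ξ ⬝ᵥ ((1 - Pin) *ᵥ ξ) = 1 - ((a : ℝ) : ℂ) := by
    rw [sub_mulVec, dotProduct_sub, one_mulVec, hξ, hdpa]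
  have htermT : star y ⬝ᵥ ((1 - Pout) *ᵥ y) = 1 - ((b : ℝ) : ℂ) := by
    rw [sub_mulVec, dotProduct_sub, one_mulVec, hy1, hdpb]
  have hQF : star (historyState T d U ψ ξ) ⬝ᵥ ((PiPen T d Pin Pout) *ᵥ historyState T d U ψ ξ)
      = (starRingEnd ℂ) (ψ 0) * ψ 0 * (1 - ((a : ℝ) : ℂ))
        + (starRingEnd ℂ) (ψ (Fin.last T)) * ψ (Fin.last T) * (1 - ((b : ℝ) : ℂ))
        + ∑ t ∈ Finset.univ.filter (fun t : Fin (T+1) => t ≠ 0 ∧ t ≠ Fin.last T),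
            (starRingEnd ℂ) (ψ t) * ψ t := by
    rw [PiPen, add_mulVec, add_mulVec, sum_mulVec', dotProduct_add, dotProduct_add, dp_sum']
    rw [qf_single, qf_single]
    congr 1
    congr 1
    · rw [h00, one_mulVec, hterm0]
    · rw [hlastW, ← hydef, htermT]
    · refine Finset.sum_congr rfl fun t ht => ?_
      rw [qf_single, one_mulVec, dpWt t ξ ξ, hξ, mul_one]
  have h0ne : (0 : Fin (T+1)) ≠ Fin.last T := by
    intro hcontra
    have := congrArg Fin.val hcontra
    simp only [Fin.val_last, Fin.val_zero] at this
    omega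
  have hfilter : Finset.univ.filter (fun t : Fin (T+1) => ¬(t ≠ 0 ∧ t ≠ Fin.last T))
      = {0, Fin.last T} := by
    ext t
    simp [not_and_or, or_comm]
    tauto
  have htot : ∑ t : Fin (T+1), (starRingEnd ℂ) (ψ t) * ψ t = 1 := by
    simpa [dotProduct, Complex.star_def] using hψ
  have hsum : ∑ t ∈ Finset.univ.filter (fun t : Fin (T+1) => t ≠ 0 ∧ t ≠ Fin.last T),
        (starRingEnd ℂ) (ψ t) * ψ t
      = 1 - (starRingEnd ℂ) (ψ 0) * ψ 0
          - (starRingEnd ℂ) (ψ (Fin.last T)) * ψ (Fin.last T) := by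
    have hsplit := Finset.sum_filter_add_sum_filter_not Finset.univ
      (fun t : Fin (T+1) => t ≠ 0 ∧ t ≠ Fin.last T)
      (fun t => (starRingEnd ℂ) (ψ t) * ψ t)
    rw [hfilter, Finset.sum_insert (by simp [h0ne]), Finset.sum_singleton, htot] at hsplit
    linear_combination hsplit
  rw [hQF, hsum]
  have hns0 : (starRingEnd ℂ) (ψ 0) * ψ 0 = ((Complex.normSq (ψ 0) : ℝ) : ℂ) := by
    rw [mul_comm, Complex.mul_conj]
  have hnsT : (starRingEnd ℂ) (ψ (Fin.last T)) * ψ (Fin.last T)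
      = ((Complex.normSq (ψ (Fin.last T)) : ℝ) : ℂ) := by
    rw [mul_comm, Complex.mul_conj]
  rw [hns0, hnsT]
  set n0 := Complex.normSq (ψ 0) with hn0def
  set nT := Complex.normSq (ψ (Fin.last T)) with hnTdef
  have hcollect : ((n0 : ℝ) : ℂ) * (1 - ((a : ℝ) : ℂ)) + ((nT : ℝ) : ℂ) * (1 - ((b : ℝ) : ℂ))
      + (1 - ((n0 : ℝ) : ℂ) - ((nT : ℝ) : ℂ))
      = (((n0 * (1 - a) + nT * (1 - b) + (1 - n0 - nT)) : ℝ) : ℂ) := by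
    push_cast
    ring
  rw [hcollect, Complex.ofReal_re, Complex.sq_norm, Complex.sq_norm, ← hn0def, ← hnTdef]
  have hn00 : 0 ≤ n0 := Complex.normSq_nonneg _
  have hnT0 : 0 ≤ nT := Complex.normSq_nonneg _
  have hmin0 : 0 ≤ min n0 nT := le_min hn00 hnT0
  have e1 : min n0 nT * (1 - s) ≤ min n0 nT * (a + b) := mul_le_mul_of_nonneg_left key hmin0
  have e1' : min n0 nT * (a + b) = min n0 nT * a + min n0 nT * b := by ring
  have e2 : min n0 nT * a ≤ n0 * a := mul_le_mul_of_nonneg_right (min_le_left _ _) ha0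
  have e3 : min n0 nT * b ≤ nT * b := mul_le_mul_of_nonneg_right (min_le_right _ _) hb0
  linarith
end

section
/- There exists a constant c > 0 such that for every integer T ≥ 3 the following holds. Let M be the (T+1)×(T+1) real symmetric matrix with entries M_{0,0} = M_{T,T} = 1/(2(T−1)); M_{t,t} = 1/2 for 1 ≤ t ≤ T−1; M_{0,1} = M_{1,0} = M_{T−1,T} = M_{T,T−1} = −1/(2·√(2T−2)); M_{t,t+1} = M_{t+1,t} = −1/4 for 1 ≤ t ≤ T−2; and all other entries equal to 0. Then M is positive semidefinite, M v = 0 for the unit vector v with v_0 = v_T = 1/2 and v_t = 1/√(2(T−1)) for 1 ≤ t ≤ T−1, and the second-smallest eigenvalue of M (counted with multiplicity) is at least c/T². -/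
open Matrix

namespace Stmt6Aux
open Finset


noncomputable def s (T : ℕ) : ℝ := Real.sqrt (2 * T - 2)
noncomputable def cV (T : ℕ) (j : ℕ) : ℝ := if j = 0 ∨ j = T then 2 else s T
noncomputable def w (T : ℕ) : ℝ := 1 / (8 * ((T:ℝ) - 1))
noncomputable def f (T : ℕ) (i : ℕ) (t : Fin (T+1)) : ℝ :=
  if t.val = i + 1 then cV T (i+1) else if t.val = i then -(cV T i) else 0

variable {T : ℕ}

lemma hs2 (hT : 1 ≤ T) : s T * s T = 2 * T - 2 := by
  have h : (0:ℝ) ≤ 2 * T - 2 := by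
    have : (1:ℝ) ≤ T := by exact_mod_cast hT
    linarith
  exact Real.mul_self_sqrt h

lemma hspos (hT : 2 ≤ T) : 0 < s T := by
  apply Real.sqrt_pos.2
  have : (2:ℝ) ≤ T := by exact_mod_cast hT
  linarith

lemma cV_pos (hT : 2 ≤ T) (j : ℕ) : 0 < cV T j := by
  unfold cV; split
  · norm_num
  · exact hspos hT

lemma cV_ne (hT : 2 ≤ T) (j : ℕ) : cV T j ≠ 0 := (cV_pos hT j).ne'

lemma spike (n k : ℕ) (c : ℕ → ℝ) :
    ∑ i ∈ range n, (if i = k then c i else 0) = if k ∈ range n then c k else 0 :=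
  Finset.sum_ite_eq' (range n) k c

lemma Mkey (hT : 3 ≤ T) (M : Matrix (Fin (T+1)) (Fin (T+1)) ℝ)
    (hM : ∀ t t' : Fin (T + 1), M t t' =
        if t = t' then
          (if t.val = 0 ∨ t.val = T then 1 / (2 * ((T : ℝ) - 1)) else 1 / 2)
        else if t.val + 1 = t'.val ∨ t'.val + 1 = t.val then
          (if t.val = 0 ∨ t'.val = 0 ∨ t.val = T ∨ t'.val = T then
            -(1 / (2 * Real.sqrt (2 * (T : ℝ) - 2)))
          else -(1 / 4))
        else 0)
    (t t' : Fin (T+1)) : M t t' = w T * ∑ i ∈ range T, f T i t * f T i t' := by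
  have hT1 : (3:ℝ) ≤ (T:ℝ) := by exact_mod_cast hT
  have hTne : (T:ℝ) - 1 ≠ 0 := by linarith
  have hs := hs2 (by omega : 1 ≤ T)
  have hsp := hspos (by omega : 2 ≤ T)
  have ha := t.isLt
  have hb := t'.isLt
  rw [hM]
  by_cases h1 : (t : ℕ) = (t' : ℕ)
  · have htt : t = t' := Fin.ext h1
    subst htt
    rw [if_pos rfl]
    by_cases h0 : (t:ℕ) = 0 ∨ (t:ℕ) = T
    · rw [if_pos h0]
      rcases h0 with h0 | h0
      · have hsum : ∀ i ∈ range T, f T i t * f T i t =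
            if i = 0 then cV T i * cV T i else 0 := by
          intro i hi
          rw [mem_range] at hi
          simp only [f, h0]
          split_ifs <;> first | ring1 | (exfalso; first | omega | assumption)
        rw [Finset.sum_congr rfl hsum, spike, if_pos (mem_range.2 (by omega))]
        have hc : cV T 0 = 2 := by simp [cV]
        rw [hc, w]; field_simp; ring
      · have hsum : ∀ i ∈ range T, f T i t * f T i t =
            if i = T - 1 then cV T (i+1) * cV T (i+1) else 0 := by
          intro i hi
          rw [mem_range] at hi
          simp only [f, h0]
          split_ifs <;> first | ring1 | (exfalso; first | omega | assumption)
        rw [Finset.sum_congr rfl hsum, spike, if_pos (mem_range.2 (by omega))]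
        have he : T - 1 + 1 = T := by omega
        rw [he]
        have hc : cV T T = 2 := by simp [cV]
        rw [hc, w]; field_simp; ring
    · rw [if_neg h0]
      push_neg at h0
      have hsum : ∀ i ∈ range T, f T i t * f T i t =
          (if i = (t:ℕ) - 1 then cV T (i+1) * cV T (i+1) else 0)
          + (if i = (t:ℕ) then cV T i * cV T i else 0) := by
        intro i hi
        rw [mem_range] at hi
        simp only [f]
        split_ifs <;> first | ring1 | (exfalso; first | omega | assumption)
      rw [Finset.sum_congr rfl hsum, Finset.sum_add_distrib, spike, spike,
        if_pos (mem_range.2 (by omega)), if_pos (mem_range.2 (by omega))]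
      have he : (t:ℕ) - 1 + 1 = (t:ℕ) := by omega
      rw [he]
      have hc : cV T (t:ℕ) = s T := by rw [cV, if_neg (by omega)]
      rw [hc, hs, w]; field_simp; ring
  · have htt : t ≠ t' := fun h => h1 (by rw [h])
    rw [if_neg htt]
    by_cases hadj : (t:ℕ) + 1 = (t':ℕ) ∨ (t':ℕ) + 1 = (t:ℕ)
    · rw [if_pos hadj]
      rcases hadj with h2 | h2
      · -- t' = t + 1
        have hsum : ∀ i ∈ range T, f T i t * f T i t' =
            if i = (t:ℕ) then -(cV T i * cV T (i+1)) else 0 := by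
          intro i hi
          rw [mem_range] at hi
          simp only [f]
          split_ifs <;> first | ring1 | (exfalso; first | omega | assumption)
        rw [Finset.sum_congr rfl hsum, spike, if_pos (mem_range.2 (by omega))]
        by_cases hbd : (t:ℕ) = 0 ∨ (t':ℕ) = 0 ∨ (t:ℕ) = T ∨ (t':ℕ) = T
        · rw [if_pos hbd]
          have hbd' : (t:ℕ) = 0 ∨ (t':ℕ) = T := by omega
          rcases hbd' with h3 | h3
          · have hc1 : cV T (t:ℕ) = 2 := by rw [cV, if_pos (Or.inl h3)]
            have hc2 : cV T ((t:ℕ)+1) = s T := by rw [cV, if_neg (by omega)]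
            rw [hc1, hc2]
            rw [show Real.sqrt (2 * (T:ℝ) - 2) = s T from rfl, w]
            field_simp
            nlinarith [hs, hsp]
          · have hc1 : cV T (t:ℕ) = s T := by rw [cV, if_neg (by omega)]
            have hc2 : cV T ((t:ℕ)+1) = 2 := by rw [cV, if_pos (Or.inr (by omega))]
            rw [hc1, hc2]
            rw [show Real.sqrt (2 * (T:ℝ) - 2) = s T from rfl, w]
            field_simp
            nlinarith [hs, hsp]
        · rw [if_neg hbd]
          push_neg at hbd
          have hc1 : cV T (t:ℕ) = s T := by rw [cV, if_neg (by omega)]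
          have hc2 : cV T ((t:ℕ)+1) = s T := by rw [cV, if_neg (by omega)]
          rw [hc1, hc2, hs, w]; field_simp; ring
      · -- t = t' + 1
        have hsum : ∀ i ∈ range T, f T i t * f T i t' =
            if i = (t':ℕ) then -(cV T (i+1) * cV T i) else 0 := by
          intro i hi
          rw [mem_range] at hi
          simp only [f]
          split_ifs <;> first | ring1 | (exfalso; first | omega | assumption)
        rw [Finset.sum_congr rfl hsum, spike, if_pos (mem_range.2 (by omega))]
        by_cases hbd : (t:ℕ) = 0 ∨ (t':ℕ) = 0 ∨ (t:ℕ) = T ∨ (t':ℕ) = T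
        · rw [if_pos hbd]
          have hbd' : (t':ℕ) = 0 ∨ (t:ℕ) = T := by omega
          rcases hbd' with h3 | h3
          · have hc1 : cV T (t':ℕ) = 2 := by rw [cV, if_pos (Or.inl h3)]
            have hc2 : cV T ((t':ℕ)+1) = s T := by rw [cV, if_neg (by omega)]
            rw [hc1, hc2]
            rw [show Real.sqrt (2 * (T:ℝ) - 2) = s T from rfl, w]
            field_simp
            nlinarith [hs, hsp]
          · have hc1 : cV T (t':ℕ) = s T := by rw [cV, if_neg (by omega)]
            have hc2 : cV T ((t':ℕ)+1) = 2 := by rw [cV, if_pos (Or.inr (by omega))]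
            rw [hc1, hc2]
            rw [show Real.sqrt (2 * (T:ℝ) - 2) = s T from rfl, w]
            field_simp
            nlinarith [hs, hsp]
        · rw [if_neg hbd]
          push_neg at hbd
          have hc1 : cV T (t':ℕ) = s T := by rw [cV, if_neg (by omega)]
          have hc2 : cV T ((t':ℕ)+1) = s T := by rw [cV, if_neg (by omega)]
          rw [hc1, hc2, hs, w]; field_simp; ring
    · rw [if_neg hadj]
      push_neg at hadj
      have hsum : ∀ i ∈ range T, f T i t * f T i t' = 0 := by
        intro i hi
        rw [mem_range] at hi
        simp only [f]
        split_ifs <;> first | ring1 | (exfalso; first | omega | assumption)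
      rw [Finset.sum_congr rfl hsum, Finset.sum_const_zero, mul_zero]


noncomputable def q (T : ℕ) (j : ℕ) : ℝ := (cV T j)⁻¹ * (cV T j)⁻¹

variable {T : ℕ}


lemma q_pos (hT : 2 ≤ T) (j : ℕ) : 0 < q T j := by
  have := cV_pos hT j
  unfold q; positivity

-- value of f ⬝ᵥ x
lemma fdot (hT : 3 ≤ T) {i : ℕ} (hi : i < T) (x : Fin (T+1) → ℝ) :
    ∑ t, f T i t * x t
      = cV T (i+1) * x ⟨i+1, by omega⟩ - cV T i * x ⟨i, by omega⟩ := by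
  have key : ∀ t : Fin (T+1), f T i t * x t
      = (if t = (⟨i+1, by omega⟩ : Fin (T+1)) then cV T (i+1) * x t else 0)
        + (if t = (⟨i, by omega⟩ : Fin (T+1)) then -(cV T i) * x t else 0) := by
    intro t
    simp only [f, Fin.ext_iff]
    split_ifs <;> first | ring1 | (exfalso; first | omega | assumption)
  rw [Finset.sum_congr rfl fun t _ => key t, Finset.sum_add_distrib,
    Finset.sum_ite_eq' univ _ (fun t => cV T (i+1) * x t),
    Finset.sum_ite_eq' univ _ (fun t => -(cV T i) * x t)]
  simp only [mem_univ, if_pos]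
  ring

-- sum of q over range (T+1) equals 1
lemma sum_q (hT : 3 ≤ T) : ∑ j ∈ range (T+1), q T j = 1 := by
  have hs := hs2 (by omega : 1 ≤ T)
  have hsp := hspos (by omega : 2 ≤ T)
  have hT1 : (3:ℝ) ≤ (T:ℝ) := by exact_mod_cast hT
  rw [Finset.sum_range_succ]
  have e0 : ∑ j ∈ range T, q T j = (∑ i ∈ range (T-1), q T (i+1)) + q T 0 := by
    have hTe : range T = range ((T-1)+1) := by congr 1; omega
    rw [hTe, Finset.sum_range_succ']
  rw [e0]
  have hint : ∀ i ∈ range (T-1), q T (i+1) = (s T)⁻¹ * (s T)⁻¹ := by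
    intro i hi
    rw [mem_range] at hi
    unfold q cV
    rw [if_neg (by omega)]
  rw [Finset.sum_congr rfl hint, Finset.sum_const, card_range, nsmul_eq_mul]
  have h0 : q T 0 = 2⁻¹ * 2⁻¹ := by unfold q cV; rw [if_pos (Or.inl rfl)]
  have hTT : q T T = 2⁻¹ * 2⁻¹ := by unfold q cV; rw [if_pos (Or.inr rfl)]
  rw [h0, hTT, ← mul_inv (s T) (s T), hs]
  have hc : ((T - 1 : ℕ) : ℝ) = (T:ℝ) - 1 := by
    have : (1:ℕ) ≤ T := by omega
    push_cast [this]; ring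
  rw [hc]
  have hne : (2*(T:ℝ) - 2) ≠ 0 := by linarith
  have hne1 : (T:ℝ) - 1 ≠ 0 := by linarith
  field_simp
  ring



-- row formula, assuming Mkey available abstractly
lemma rowform (M : Matrix (Fin (T+1)) (Fin (T+1)) ℝ)
    (hkey : ∀ t t', M t t' = w T * ∑ i ∈ range T, f T i t * f T i t')
    (x : Fin (T+1) → ℝ) (t : Fin (T+1)) :
    M.mulVec x t = w T * ∑ i ∈ range T, (f T i t * ∑ t', f T i t' * x t') := by
  show ∑ t', M t t' * x t' = _
  calc ∑ t', M t t' * x t'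
      = ∑ t', ∑ i ∈ range T, w T * (f T i t * f T i t' * x t') := by
        refine Finset.sum_congr rfl fun t' _ => ?_
        rw [hkey t t', Finset.mul_sum, Finset.sum_mul]
        exact Finset.sum_congr rfl fun i _ => by ring
    _ = ∑ i ∈ range T, ∑ t', w T * (f T i t * f T i t' * x t') := Finset.sum_comm
    _ = w T * ∑ i ∈ range T, (f T i t * ∑ t', f T i t' * x t') := by
        rw [Finset.mul_sum]
        refine Finset.sum_congr rfl fun i _ => ?_
        rw [Finset.mul_sum, Finset.mul_sum]
        exact Finset.sum_congr rfl fun t' _ => by ring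

lemma quadform (M : Matrix (Fin (T+1)) (Fin (T+1)) ℝ)
    (hkey : ∀ t t', M t t' = w T * ∑ i ∈ range T, f T i t * f T i t')
    (x : Fin (T+1) → ℝ) :
    x ⬝ᵥ M.mulVec x = w T * ∑ i ∈ range T, (∑ t, f T i t * x t)^2 := by
  show ∑ t, x t * M.mulVec x t = _
  calc ∑ t, x t * M.mulVec x t
      = ∑ t, ∑ i ∈ range T, w T * (x t * f T i t * ∑ t', f T i t' * x t') := by
        refine Finset.sum_congr rfl fun t _ => ?_
        rw [rowform M hkey x t, Finset.mul_sum, Finset.mul_sum]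
        exact Finset.sum_congr rfl fun i _ => by ring
    _ = ∑ i ∈ range T, ∑ t, w T * (x t * f T i t * ∑ t', f T i t' * x t') :=
        Finset.sum_comm
    _ = w T * ∑ i ∈ range T, (∑ t, f T i t * x t)^2 := by
        rw [Finset.mul_sum]
        refine Finset.sum_congr rfl fun i _ => ?_
        rw [sq, Finset.sum_mul, Finset.mul_sum]
        exact Finset.sum_congr rfl fun t _ => by ring

-- telescoping bound
lemma diffbound (hT : 3 ≤ T) (y : ℕ → ℝ) {a b : ℕ} (ha : a ≤ T) (hb : b ≤ T) :
    (y a - y b)^2 ≤ (T:ℝ) * ∑ i ∈ range T, (y (i+1) - y i)^2 := by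
  set D := ∑ i ∈ range T, (y (i+1) - y i)^2 with hD
  have hDnn : 0 ≤ D := Finset.sum_nonneg fun i _ => sq_nonneg _
  have key : ∀ m n : ℕ, m ≤ n → n ≤ T → (y n - y m)^2 ≤ (T:ℝ) * D := by
    intro m n hmn hn
    have tel : ∑ i ∈ Ico m n, (y (i+1) - y i) = y n - y m := by
      rw [Finset.sum_Ico_eq_sub _ hmn, Finset.sum_range_sub, Finset.sum_range_sub]
      ring
    have cs : (∑ i ∈ Ico m n, (y (i+1) - y i))^2
        ≤ (#(Ico m n) : ℝ) * ∑ i ∈ Ico m n, (y (i+1) - y i)^2 :=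
      sq_sum_le_card_mul_sum_sq
    rw [tel] at cs
    have hsub : ∑ i ∈ Ico m n, (y (i+1) - y i)^2 ≤ D := by
      apply Finset.sum_le_sum_of_subset_of_nonneg
      · intro i hi
        rw [mem_Ico] at hi; rw [mem_range]; omega
      · intro i _ _; exact sq_nonneg _
    have hcard : (#(Ico m n) : ℝ) ≤ (T:ℝ) := by
      rw [Nat.card_Ico]
      exact_mod_cast (by omega : n - m ≤ T)
    calc (y n - y m)^2 ≤ (#(Ico m n) : ℝ) * ∑ i ∈ Ico m n, (y (i+1) - y i)^2 := cs
      _ ≤ (T:ℝ) * D := by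
          apply mul_le_mul hcard hsub (Finset.sum_nonneg fun i _ => sq_nonneg _)
          exact_mod_cast Nat.zero_le _
  rcases le_total a b with h | h
  · have := key a b h hb
    calc (y a - y b)^2 = (y b - y a)^2 := by ring
      _ ≤ _ := this
  · exact key b a h ha

-- variance identity
lemma varid (R : Finset ℕ) (p y : ℕ → ℝ) :
    ∑ a ∈ R, ∑ b ∈ R, p a * p b * (y a - y b)^2
      = 2 * (∑ j ∈ R, p j) * (∑ j ∈ R, p j * y j^2)
        - 2 * (∑ j ∈ R, p j * y j)^2 := by
  set Q := ∑ j ∈ R, p j with hQ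
  set S1 := ∑ j ∈ R, p j * y j with hS1
  set S2 := ∑ j ∈ R, p j * y j^2 with hS2
  calc ∑ a ∈ R, ∑ b ∈ R, p a * p b * (y a - y b)^2
      = ∑ a ∈ R, ((p a * y a^2) * Q + p a * S2 - 2 * ((p a * y a) * S1)) := by
        refine Finset.sum_congr rfl fun a _ => ?_
        calc ∑ b ∈ R, p a * p b * (y a - y b)^2
            = ∑ b ∈ R, ((p a * y a^2) * p b + p a * (p b * y b^2)
                - 2 * ((p a * y a) * (p b * y b))) :=
              Finset.sum_congr rfl fun b _ => by ring
          _ = _ := by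
              rw [Finset.sum_sub_distrib, Finset.sum_add_distrib,
                ← Finset.mul_sum, ← Finset.mul_sum, ← Finset.mul_sum, ← Finset.mul_sum]
    _ = S2 * Q + Q * S2 - 2 * (S1 * S1) := by
        rw [Finset.sum_sub_distrib, Finset.sum_add_distrib,
          ← Finset.sum_mul, ← Finset.sum_mul, ← Finset.mul_sum, ← Finset.sum_mul]
    _ = 2 * Q * S2 - 2 * S1^2 := by ring



-- the eigenvector identity
lemma hv (hT : 3 ≤ T) (t : Fin (T+1)) :
    (if (t:ℕ) = 0 ∨ (t:ℕ) = T then (1:ℝ) / 2 else 1 / Real.sqrt (2 * ((T:ℝ) - 1)))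
      = (cV T (t:ℕ))⁻¹ := by
  unfold cV
  split_ifs with h
  · norm_num
  · rw [one_div]
    congr 2
    ring


end Stmt6Aux

open Finset Stmt6Aux

theorem stmt6 :
    ∃ c : ℝ, 0 < c ∧ ∀ T : ℕ, 3 ≤ T →
      ∀ M : Matrix (Fin (T + 1)) (Fin (T + 1)) ℝ,
      (∀ t t' : Fin (T + 1), M t t' =
        if t = t' then
          (if t.val = 0 ∨ t.val = T then 1 / (2 * ((T : ℝ) - 1)) else 1 / 2)
        else if t.val + 1 = t'.val ∨ t'.val + 1 = t.val then
          (if t.val = 0 ∨ t'.val = 0 ∨ t.val = T ∨ t'.val = T then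
            -(1 / (2 * Real.sqrt (2 * (T : ℝ) - 2)))
          else -(1 / 4))
        else 0) →
      M.PosSemidef ∧
      (let v : Fin (T + 1) → ℝ := fun t =>
        if t.val = 0 ∨ t.val = T then 1 / 2 else 1 / Real.sqrt (2 * ((T : ℝ) - 1))
       v ⬝ᵥ v = 1 ∧ M.mulVec v = 0 ∧
       ∀ x : Fin (T + 1) → ℝ, v ⬝ᵥ x = 0 →
         c / (T : ℝ) ^ 2 * (x ⬝ᵥ x) ≤ x ⬝ᵥ M.mulVec x) := by
  refine ⟨1/4, by norm_num, ?_⟩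
  intro T hT M hM
  have hkey := Mkey hT M hM
  have hT1 : (3:ℝ) ≤ (T:ℝ) := by exact_mod_cast hT
  have hs := hs2 (by omega : 1 ≤ T)
  have hsp := hspos (by omega : 2 ≤ T)
  have hcne := cV_ne (by omega : 2 ≤ T)
  have hwpos : 0 < w T := by
    rw [w]
    have : (0:ℝ) < 8*((T:ℝ)-1) := by linarith
    positivity
  have hquadx : ∀ x : Fin (T+1) → ℝ,
      x ⬝ᵥ M.mulVec x = w T * ∑ i ∈ range T, (∑ t, f T i t * x t)^2 :=
    quadform M hkey
  have hherm : M.IsHermitian := by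
    ext t t'
    rw [conjTranspose_apply, hkey t' t, hkey t t', star_trivial]
    congr 1
    exact Finset.sum_congr rfl fun i _ => mul_comm _ _
  have hpsd : M.PosSemidef := by
    refine posSemidef_iff_dotProduct_mulVec.mpr ⟨hherm, fun x => ?_⟩
    have hsx : star x = x := by funext i; exact star_trivial _
    rw [hsx, hquadx x]
    exact mul_nonneg hwpos.le (Finset.sum_nonneg fun i _ => sq_nonneg _)
  set v : Fin (T + 1) → ℝ := fun t =>
      if t.val = 0 ∨ t.val = T then 1 / 2 else 1 / Real.sqrt (2 * ((T : ℝ) - 1))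
    with hvdef
  have hvq : ∀ t : Fin (T+1), v t = (cV T (t:ℕ))⁻¹ := by
    intro t
    simp only [hvdef]
    exact hv hT t
  have hvv : v ⬝ᵥ v = 1 := by
    show ∑ t, v t * v t = 1
    calc ∑ t : Fin (T+1), v t * v t
        = ∑ t : Fin (T+1), q T (t:ℕ) := by
          refine Finset.sum_congr rfl fun t _ => ?_
          rw [hvq t]
          simp only [q]
      _ = ∑ j ∈ range (T+1), q T j := Fin.sum_univ_eq_sum_range _ _
      _ = 1 := sum_q hT
  have hfv : ∀ i ∈ range T, (∑ t', f T i t' * v t') = 0 := by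
    intro i hi
    rw [mem_range] at hi
    rw [fdot hT hi v, hvq, hvq]
    show cV T (i+1) * (cV T (i+1))⁻¹ - cV T i * (cV T i)⁻¹ = 0
    rw [mul_inv_cancel₀ (hcne _), mul_inv_cancel₀ (hcne _), sub_self]
  have hMv : M.mulVec v = 0 := by
    funext t
    show M.mulVec v t = 0
    rw [rowform M hkey v t]
    rw [Finset.sum_congr rfl fun i hi => by rw [hfv i hi, mul_zero]]
    rw [Finset.sum_const_zero, mul_zero]
  have hineq : ∀ x : Fin (T + 1) → ℝ, v ⬝ᵥ x = 0 →
      1/4 / (T : ℝ) ^ 2 * (x ⬝ᵥ x) ≤ x ⬝ᵥ M.mulVec x := by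
    intro x hx
    set y : ℕ → ℝ := fun j => if h : j < T + 1 then cV T j * x ⟨j, h⟩ else 0 with hy
    set D := ∑ i ∈ range T, (y (i+1) - y i)^2 with hD
    have hDnn : 0 ≤ D := Finset.sum_nonneg fun i _ => sq_nonneg _
    have hyt : ∀ t : Fin (T+1), y (t:ℕ) = cV T (t:ℕ) * x t := by
      intro t
      simp only [hy]
      rw [dif_pos t.isLt]
    have hquad : x ⬝ᵥ M.mulVec x = w T * D := by
      rw [hquadx x, hD]
      congr 1
      refine Finset.sum_congr rfl fun i hi => ?_
      rw [mem_range] at hi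
      rw [fdot hT hi x]
      simp only [hy]
      rw [dif_pos (show i+1 < T+1 by omega), dif_pos (show i < T+1 by omega)]
    have hxx : x ⬝ᵥ x = ∑ j ∈ range (T+1), q T j * y j^2 := by
      show ∑ t, x t * x t = _
      rw [← Fin.sum_univ_eq_sum_range (fun j => q T j * y j^2) (T+1)]
      refine Finset.sum_congr rfl fun t _ => ?_
      rw [hyt t]
      simp only [q]
      field_simp [hcne (t:ℕ)]
    have hvxsum : ∑ j ∈ range (T+1), q T j * y j = 0 := by
      rw [← hx]
      rw [← Fin.sum_univ_eq_sum_range (fun j => q T j * y j) (T+1)]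
      show _ = ∑ t, v t * x t
      refine Finset.sum_congr rfl fun t _ => ?_
      rw [hyt t, hvq t]
      simp only [q]
      field_simp [hcne (t:ℕ)]
    have hQ := sum_q hT
    have hvar := varid (range (T+1)) (q T) y
    have hqp : ∀ j, 0 < q T j := q_pos (by omega)
    have hbnd : ∑ a ∈ range (T+1), ∑ b ∈ range (T+1), q T a * q T b * (y a - y b)^2
        ≤ (T:ℝ) * D := by
      calc ∑ a ∈ range (T+1), ∑ b ∈ range (T+1), q T a * q T b * (y a - y b)^2
          ≤ ∑ a ∈ range (T+1), ∑ b ∈ range (T+1), q T a * q T b * ((T:ℝ)*D) := by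
            refine Finset.sum_le_sum fun a ha => Finset.sum_le_sum fun b hb => ?_
            rw [mem_range] at ha hb
            exact mul_le_mul_of_nonneg_left
              (diffbound hT y (by omega) (by omega))
              (le_of_lt (mul_pos (hqp a) (hqp b)))
        _ = (T:ℝ) * D := by
            have inner : ∀ a ∈ range (T+1),
                ∑ b ∈ range (T+1), q T a * q T b * ((T:ℝ)*D) = q T a * ((T:ℝ)*D) := by
              intro a _
              calc ∑ b ∈ range (T+1), q T a * q T b * ((T:ℝ)*D)
                  = ∑ b ∈ range (T+1), (q T a * ((T:ℝ)*D)) * q T b :=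
                    Finset.sum_congr rfl fun b _ => by ring
                _ = (q T a * ((T:ℝ)*D)) * ∑ b ∈ range (T+1), q T b :=
                    (Finset.mul_sum _ _ _).symm
                _ = q T a * ((T:ℝ)*D) := by rw [hQ, mul_one]
            rw [Finset.sum_congr rfl inner, ← Finset.sum_mul, hQ, one_mul]
    have hS2bd : 2 * (∑ j ∈ range (T+1), q T j * y j^2) ≤ (T:ℝ) * D := by
      have e : 2 * (∑ j ∈ range (T+1), q T j * y j^2)
          = 2 * (∑ j ∈ range (T+1), q T j) * (∑ j ∈ range (T+1), q T j * y j^2)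
            - 2 * (∑ j ∈ range (T+1), q T j * y j)^2 := by
        rw [hQ, hvxsum]; ring
      rw [e, ← hvar]
      exact hbnd
    have hS2nn : 0 ≤ ∑ j ∈ range (T+1), q T j * y j^2 :=
      Finset.sum_nonneg fun j _ => mul_nonneg (hqp j).le (sq_nonneg _)
    rw [hquad, hxx]
    set S2 := ∑ j ∈ range (T+1), q T j * y j^2 with hS2def
    rw [w]
    have hTpos : (0:ℝ) < T := by linarith
    have step1 : S2 ≤ (T:ℝ) * D / 2 := by linarith
    have h1 : 1/4/(T:ℝ)^2 * S2 ≤ 1/4/(T:ℝ)^2 * ((T:ℝ)*D/2) :=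
      mul_le_mul_of_nonneg_left step1 (by positivity)
    have h2 : 1/4/(T:ℝ)^2 * ((T:ℝ)*D/2) = D / (8*(T:ℝ)) := by
      field_simp
      ring
    have h3 : D / (8*(T:ℝ)) ≤ D / (8*((T:ℝ)-1)) := by
      gcongr
      · linarith
      · linarith
    have h4 : 1/(8*((T:ℝ)-1)) * D = D / (8*((T:ℝ)-1)) := by ring
    linarith
  exact ⟨hpsd, hvv, hMv, hineq⟩
end

section
/- Let H_0 and B be Hermitian n×n complex matrices with B positive semidefinite. Suppose the second-smallest eigenvalue of H_0 (eigenvalues counted with multiplicity in nondecreasing order) is at least 1, and suppose there exists a unit vector φ with Bφ = 0 and ⟨φ, H_0 φ⟩ ≤ 3/4. Then for every real s ≥ 0, writing λ_0(s) ≤ λ_1(s) for the two smallest eigenvalues (with multiplicity) of H_0 + sB, one has λ_1(s) − λ_0(s) ≥ 1/4. -/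
open Matrix ComplexOrder

noncomputable section

namespace Stmt7Aux

local notation "⟪" x ", " y "⟫" => @inner ℂ _ _ x y

variable {n : ℕ} {A : Matrix (Fin n) (Fin n) ℂ}

lemma quadE (hA : A.IsHermitian) (x : EuclideanSpace ℂ (Fin n)) :
    ⟪x, Matrix.toEuclideanLin A x⟫ =
      ∑ i, (hA.eigenvalues i : ℂ) * (‖hA.eigenvectorBasis.repr x i‖ ^ 2 : ℝ) := by
  set b := hA.eigenvectorBasis
  have hb : ∀ i, Matrix.toEuclideanLin A (b i) = (hA.eigenvalues i : ℂ) • b i := by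
    intro i
    have := hA.mulVec_eigenvectorBasis i
    apply (WithLp.equiv 2 (Fin n → ℂ)).injective
    simp only [WithLp.equiv_apply, Matrix.piLp_ofLp_toEuclideanLin, Matrix.toLin'_apply]
    ext k
    have h2 := congrFun this k
    simpa [WithLp.equiv, Complex.real_smul] using h2
  conv_lhs => rw [← b.sum_repr x]
  rw [map_sum, inner_sum]
  congr 1
  ext i
  rw [LinearMap.map_smul, hb, smul_smul, inner_smul_right]
  have : ⟪(∑ j, b.repr x j • b j : EuclideanSpace ℂ (Fin n)), b i⟫ = starRingEnd ℂ (b.repr x i) := by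
    rw [sum_inner]
    rw [Finset.sum_eq_single i]
    · rw [inner_smul_left, orthonormal_iff_ite.mp b.orthonormal i i]
      simp
    · intro j _ hj
      rw [inner_smul_left, orthonormal_iff_ite.mp b.orthonormal j i, if_neg hj, mul_zero]
    · simp
  rw [this]
  have hz := Complex.mul_conj' (b.repr x i)
  push_cast
  linear_combination (hA.eigenvalues i : ℂ) * hz

lemma inner_toEuclideanLin (M : Matrix (Fin n) (Fin n) ℂ) (x : EuclideanSpace ℂ (Fin n)) :
    ⟪x, Matrix.toEuclideanLin M x⟫
      = star (WithLp.equiv 2 (Fin n → ℂ) x) ⬝ᵥ M *ᵥ (WithLp.equiv 2 (Fin n → ℂ) x) := by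
  rw [EuclideanSpace.inner_eq_star_dotProduct, dotProduct_comm]; rfl

lemma quadE_re (hA : A.IsHermitian) (x : EuclideanSpace ℂ (Fin n)) :
    (⟪x, Matrix.toEuclideanLin A x⟫).re =
      ∑ i, hA.eigenvalues i * ‖hA.eigenvectorBasis.repr x i‖ ^ 2 := by
  rw [quadE hA x]
  simp [← Complex.ofReal_pow]

lemma norm_sq_eq_sum_repr (b : OrthonormalBasis (Fin n) ℂ (EuclideanSpace ℂ (Fin n)))
    (x : EuclideanSpace ℂ (Fin n)) :
    ∑ i, ‖b.repr x i‖ ^ 2 = ‖x‖ ^ 2 := by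
  have h1 : ‖b.repr x‖ = ‖x‖ := b.repr.norm_map x
  have h2 := EuclideanSpace.norm_eq (b.repr x)
  rw [h1] at h2
  have h3 : (0:ℝ) ≤ ∑ i, ‖b.repr x i‖ ^ 2 :=
    Finset.sum_nonneg fun i _ => sq_nonneg _
  rw [h2, Real.sq_sqrt h3]

lemma quadR (hA : A.IsHermitian) (y : Fin n → ℂ) :
    (star y ⬝ᵥ A *ᵥ y).re =
      ∑ i, hA.eigenvalues i *
        ‖hA.eigenvectorBasis.repr ((WithLp.equiv 2 (Fin n → ℂ)).symm y) i‖ ^ 2 := by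
  set x : EuclideanSpace ℂ (Fin n) := (WithLp.equiv 2 (Fin n → ℂ)).symm y
  have hy : WithLp.equiv 2 (Fin n → ℂ) x = y := rfl
  have := congrArg Complex.re ((inner_toEuclideanLin A x).symm.trans (quadE hA x))
  rw [hy] at this
  rw [this]
  simp [← Complex.ofReal_pow]

lemma normR (y : Fin n → ℂ) :
    (star y ⬝ᵥ y).re = ‖(WithLp.equiv 2 (Fin n → ℂ)).symm y‖ ^ 2 := by
  set x : EuclideanSpace ℂ (Fin n) := (WithLp.equiv 2 (Fin n → ℂ)).symm y
  have : ⟪x, x⟫ = star y ⬝ᵥ y := by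
    rw [EuclideanSpace.inner_eq_star_dotProduct, dotProduct_comm]; rfl
  rw [← this, inner_self_eq_norm_sq_to_K]
  simp [← Complex.ofReal_pow]

lemma iInf_le_rayleigh (hn : 0 < n) (hA : A.IsHermitian) (φ : Fin n → ℂ)
    (hφ : star φ ⬝ᵥ φ = 1) :
    (⨅ j, hA.eigenvalues j) ≤ (star φ ⬝ᵥ A *ᵥ φ).re := by
  haveI : Nonempty (Fin n) := ⟨⟨0, hn⟩⟩
  have hbdd : BddBelow (Set.range hA.eigenvalues) := (Set.finite_range _).bddBelow
  rw [quadR hA φ]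
  set c := hA.eigenvectorBasis.repr ((WithLp.equiv 2 (Fin n → ℂ)).symm φ)
  have hsum : ∑ i, ‖c i‖ ^ 2 = 1 := by
    have := normR (n := n) φ
    rw [hφ] at this
    simp only [Complex.one_re] at this
    rw [norm_sq_eq_sum_repr, ← this]
  calc (⨅ j, hA.eigenvalues j) = ∑ i, (⨅ j, hA.eigenvalues j) * ‖c i‖ ^ 2 := by
        rw [← Finset.mul_sum, hsum, mul_one]
    _ ≤ ∑ i, hA.eigenvalues i * ‖c i‖ ^ 2 := by
        apply Finset.sum_le_sum
        intro i _
        exact mul_le_mul_of_nonneg_right (ciInf_le hbdd i) (sq_nonneg _)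

lemma sum_pair_of_support {f : Fin n → ℝ} {i j : Fin n} (hij : i ≠ j)
    (h0 : ∀ k, k ≠ i → k ≠ j → f k = 0) :
    ∑ k, f k = f i + f j := by
  rw [← Finset.sum_pair hij]
  refine (Finset.sum_subset (Finset.subset_univ _) ?_).symm
  intro k _ hk
  simp only [Finset.mem_insert, Finset.mem_singleton] at hk
  push_neg at hk
  exact h0 k hk.1 hk.2

end Stmt7Aux

end

local notation "⟪" x ", " y "⟫" => @inner ℂ _ _ x y

open Stmt7Aux
set_option maxHeartbeats 1000000

theorem stmt7 (n : ℕ) (hn : 2 ≤ n)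
    (H0 B : Matrix (Fin n) (Fin n) ℂ)
    (hH0 : H0.IsHermitian) (hB : B.PosSemidef)
    -- the second-smallest eigenvalue of `H0` (with multiplicity) is at least 1,
    -- i.e. at most one eigenvalue of `H0` is `< 1`:
    (h2 : (Finset.univ.filter fun i => hH0.eigenvalues i < 1).card ≤ 1)
    (φ : Fin n → ℂ) (hφunit : star φ ⬝ᵥ φ = 1)
    (hφB : B.mulVec φ = 0)
    (hφH0 : (star φ ⬝ᵥ H0.mulVec φ).re ≤ 3 / 4) :
    ∀ s : ℝ, 0 ≤ s → ∀ hs : (H0 + s • B).IsHermitian,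
      -- the spectral gap `λ₁(s) − λ₀(s)` is at least `1/4`, i.e. at most one
      -- eigenvalue of `H0 + s B` lies below `λ₀(s) + 1/4`:
      (Finset.univ.filter fun i =>
        hs.eigenvalues i < (⨅ j, hs.eigenvalues j) + 1 / 4).card ≤ 1 := by
  intro s hs0 hs
  by_contra hcard
  push_neg at hcard
  obtain ⟨i, hi, j, hj, hij⟩ := Finset.one_lt_card.mp hcard
  simp only [Finset.mem_filter, Finset.mem_univ, true_and] at hi hj
  -- ground energy at most 3/4
  have hmulvec : (H0 + s • B) *ᵥ φ = H0 *ᵥ φ := by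
    rw [add_mulVec, smul_mulVec, hφB, smul_zero, add_zero]
  have hinf : (⨅ k, hs.eigenvalues k) ≤ 3 / 4 := by
    have h := iInf_le_rayleigh (by omega) hs φ hφunit
    rw [hmulvec] at h
    linarith
  have hi1 : hs.eigenvalues i < 1 := by linarith
  have hj1 : hs.eigenvalues j < 1 := by linarith
  -- eigenvectors
  set v := hs.eigenvectorBasis with hv
  set w := hH0.eigenvectorBasis with hw
  set p : Fin n → ℂ := fun k => w.repr (v i) k with hp'
  set q : Fin n → ℂ := fun k => w.repr (v j) k with hq'
  obtain ⟨a, b, hab, habK⟩ : ∃ a b : ℂ, ¬(a = 0 ∧ b = 0) ∧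
      ∀ k, hH0.eigenvalues k < 1 → a * p k + b * q k = 0 := by
    by_cases hK : ∃ k, hH0.eigenvalues k < 1
    · obtain ⟨k₀, hk₀⟩ := hK
      have huniq : ∀ k, hH0.eigenvalues k < 1 → k = k₀ := by
        intro k hk
        exact Finset.card_le_one.mp h2 k (by simp [hk]) k₀ (by simp [hk₀])
      by_cases hpk : p k₀ = 0
      · exact ⟨1, 0, by simp, fun k hk => by rw [huniq k hk]; simp [hpk]⟩
      · exact ⟨q k₀, -p k₀, fun h => hpk (by simpa using h.2), fun k hk => by
          rw [huniq k hk]; ring⟩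
    · exact ⟨1, 0, by simp, fun k hk => absurd ⟨k, hk⟩ hK⟩
  set x : EuclideanSpace ℂ (Fin n) := a • v i + b • v j with hx
  set S : ℝ := ‖a‖ ^ 2 + ‖b‖ ^ 2 with hSdef
  have hS0 : 0 < S := by
    rw [hSdef]
    rcases not_and_or.mp hab with h | h
    · have ha : 0 < ‖a‖ ^ 2 := pow_pos (norm_pos_iff.mpr h) 2
      nlinarith [sq_nonneg ‖b‖]
    · have hb' : 0 < ‖b‖ ^ 2 := pow_pos (norm_pos_iff.mpr h) 2
      nlinarith [sq_nonneg ‖a‖]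
  -- repr of x in the basis v
  have hreprv : ∀ k, v.repr x k = a * (if k = i then 1 else 0) + b * (if k = j then 1 else 0) := by
    intro k
    have : v.repr x = a • EuclideanSpace.single i (1:ℂ) + b • EuclideanSpace.single j 1 := by
      rw [hx, map_add, _root_.map_smul, _root_.map_smul, v.repr_self, v.repr_self]
    rw [this]
    simp [EuclideanSpace.single_apply]
  have hsumv : ∀ (g : Fin n → ℝ), (∑ k, g k * ‖v.repr x k‖ ^ 2) = g i * ‖a‖ ^ 2 + g j * ‖b‖ ^ 2 := by
    intro g
    have h0 : ∀ k, k ≠ i → k ≠ j → g k * ‖v.repr x k‖ ^ 2 = 0 := by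
      intro k hki hkj
      rw [hreprv k, if_neg hki, if_neg hkj]
      simp
    have := sum_pair_of_support (f := fun k => g k * ‖v.repr x k‖ ^ 2) hij h0
    rw [this]
    show g i * ‖v.repr x i‖ ^ 2 + g j * ‖v.repr x j‖ ^ 2 = _
    rw [hreprv i, hreprv j, if_pos rfl, if_pos rfl, if_neg hij, if_neg (Ne.symm hij)]
    simp
  -- sum of |repr|^2 in basis v equals S
  have hnormv : ∑ k, ‖v.repr x k‖ ^ 2 = S := by
    have := hsumv (fun _ => 1)
    simpa using this
  -- quadratic form of H0 + sB on x is < S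
  have hQA : (⟪x, Matrix.toEuclideanLin (H0 + s • B) x⟫).re < S := by
    rw [quadE_re hs x, hsumv (fun k => hs.eigenvalues k), hSdef]
    rcases not_and_or.mp hab with h | h
    · have ha : 0 < ‖a‖ ^ 2 := pow_pos (norm_pos_iff.mpr h) 2
      nlinarith [sq_nonneg ‖b‖]
    · have hb' : 0 < ‖b‖ ^ 2 := pow_pos (norm_pos_iff.mpr h) 2
      nlinarith [sq_nonneg ‖a‖]
  -- quadratic form of H0 on x is ≥ S
  have hQH : S ≤ (⟪x, Matrix.toEuclideanLin H0 x⟫).re := by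
    rw [quadE_re hH0 x]
    have hreprw : ∀ k, w.repr x k = a * p k + b * q k := by
      intro k
      rw [hx, map_add, _root_.map_smul, _root_.map_smul]
      rfl
    have key : ∀ k, ‖w.repr x k‖ ^ 2 ≤ hH0.eigenvalues k * ‖w.repr x k‖ ^ 2 := by
      intro k
      by_cases hk : hH0.eigenvalues k < 1
      · rw [hreprw k, habK k hk]
        simp
      · push_neg at hk
        nlinarith [sq_nonneg ‖w.repr x k‖]
    calc S = ∑ k, ‖v.repr x k‖ ^ 2 := hnormv.symm
      _ = ‖x‖ ^ 2 := norm_sq_eq_sum_repr v x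
      _ = ∑ k, ‖w.repr x k‖ ^ 2 := (norm_sq_eq_sum_repr w x).symm
      _ ≤ ∑ k, hH0.eigenvalues k * ‖w.repr x k‖ ^ 2 :=
        Finset.sum_le_sum fun k _ => key k
  -- PSD part
  have hQB : 0 ≤ (⟪x, Matrix.toEuclideanLin B x⟫).re := by
    rw [inner_toEuclideanLin]
    exact hB.re_dotProduct_nonneg _
  -- additivity
  have hadd : (⟪x, Matrix.toEuclideanLin (H0 + s • B) x⟫).re
      = (⟪x, Matrix.toEuclideanLin H0 x⟫).re + s * (⟪x, Matrix.toEuclideanLin B x⟫).re := by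
    have h1 : Matrix.toEuclideanLin (H0 + s • B) =
        Matrix.toEuclideanLin H0 + (s : ℂ) • Matrix.toEuclideanLin B := by
      rw [map_add]
      congr 1
      rw [← algebraMap_smul ℂ s B, _root_.map_smul]
      norm_num
    rw [h1]
    simp only [LinearMap.add_apply, LinearMap.smul_apply, inner_add_right,
      inner_smul_right, Complex.add_re, Complex.mul_re, Complex.ofReal_re,
      Complex.ofReal_im, zero_mul, sub_zero]
  have : S ≤ (⟪x, Matrix.toEuclideanLin (H0 + s • B) x⟫).re := by
    rw [hadd]
    nlinarith
  linarith
end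

section
/- Let H be an n×n Hermitian matrix which is stoquastic in the standard basis, i.e. H_{t,t'} is real and H_{t,t'} ≤ 0 for all t ≠ t'. Let φ ∈ ℝ^n be a vector with φ_t > 0 for every index t. Then the smallest eigenvalue E of H satisfies E ≥ min_t ( (Hφ)_t / φ_t ). -/
open Matrix

theorem stmt9 (n : ℕ) (hn : 0 < n)
    (H : Matrix (Fin n) (Fin n) ℂ) (hH : H.IsHermitian)
    (hstoq : ∀ t t' : Fin n, t ≠ t' → (H t t').im = 0 ∧ (H t t').re ≤ 0)
    (φ : Fin n → ℝ) (hφ : ∀ t, 0 < φ t)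
    (E : ℝ) (hE : E = ⨅ i, hH.eigenvalues i) :
    (⨅ t : Fin n, ((H.mulVec fun s => (φ s : ℂ)) t).re / φ t) ≤ E := by
  have hne : Nonempty (Fin n) := ⟨⟨0, hn⟩⟩
  obtain ⟨i₀, hi₀⟩ := exists_eq_ciInf_of_finite (f := hH.eigenvalues)
  set ψ : Fin n → ℂ := ⇑(hH.eigenvectorBasis i₀) with hψdef
  set Ev : ℝ := hH.eigenvalues i₀ with hEv
  have hmul : ∀ u : Fin n, ∑ s, H u s * ψ s = (Ev : ℂ) * ψ u := by
    intro u
    have h := congrFun (hH.mulVec_eigenvectorBasis i₀) u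
    simpa [Matrix.mulVec, dotProduct, Complex.real_smul] using h
  -- ψ is nonzero
  obtain ⟨s0, hs0⟩ : ∃ s, ψ s ≠ 0 := by
    by_contra h
    push_neg at h
    have : (hH.eigenvectorBasis i₀ : EuclideanSpace ℂ (Fin n)) = 0 := by
      ext s; exact h s
    exact hH.eigenvectorBasis.orthonormal.ne_zero i₀ this
  obtain ⟨t, ht⟩ := Finite.exists_max (fun s => ‖ψ s‖ / φ s)
  set r : ℝ := ‖ψ t‖ / φ t with hr
  have hrpos : 0 < r :=
    lt_of_lt_of_le (div_pos (norm_pos_iff.mpr hs0) (hφ s0)) (ht s0)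
  have habs : ∀ s, ‖ψ s‖ ≤ r * φ s := by
    intro s
    exact (div_le_iff₀ (hφ s)).mp (ht s)
  have habst : ‖ψ t‖ = r * φ t := (div_mul_cancel₀ _ (hφ t).ne').symm
  -- key inequality: (Hφ)_t.re ≤ Ev * φ t
  have hdiagim : (H t t).im = 0 := by
    have := congrFun (congrFun hH t) t
    have h2 : (starRingEnd ℂ) (H t t) = H t t := this
    have := Complex.conj_eq_iff_im.mp h2
    exact this
  have key : ((H.mulVec fun s => (φ s : ℂ)) t).re ≤ Ev * φ t := by
    have hre : ((H.mulVec fun s => (φ s : ℂ)) t).re = ∑ s, (H t s).re * φ s := by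
      simp [Matrix.mulVec, dotProduct, Complex.re_sum, Complex.mul_re]
    -- Ev * |ψ t|^2 = ∑ s, re (H t s * (conj (ψ t) * ψ s))
    have h1 : Ev * ‖ψ t‖ ^ 2
        = ∑ s, (H t s * ((starRingEnd ℂ) (ψ t) * ψ s)).re := by
      have h2 : ((starRingEnd ℂ) (ψ t) * ((Ev : ℂ) * ψ t)).re
          = Ev * ‖ψ t‖ ^ 2 := by
        rw [show (starRingEnd ℂ) (ψ t) * ((Ev : ℂ) * ψ t)
            = (Ev : ℂ) * (ψ t * (starRingEnd ℂ) (ψ t)) by ring,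
          Complex.mul_conj, ← Complex.ofReal_mul, Complex.ofReal_re,
          Complex.normSq_eq_norm_sq]
      rw [← h2, ← hmul t, Finset.mul_sum]
      rw [Complex.re_sum]
      congr 1; funext s; ring_nf
    -- lower bound each term
    have h3 : ∀ s, (H t s).re * ((r * φ t) * (r * φ s))
        ≤ (H t s * ((starRingEnd ℂ) (ψ t) * ψ s)).re := by
      intro s
      by_cases hst : t = s
      · subst hst
        rw [show (starRingEnd ℂ) (ψ t) * ψ t = ((‖ψ t‖ ^ 2 : ℝ) : ℂ) by
          rw [mul_comm, Complex.mul_conj, Complex.normSq_eq_norm_sq]]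
        rw [Complex.mul_re, Complex.ofReal_re, Complex.ofReal_im, mul_zero, sub_zero, habst]
        apply le_of_eq; ring
      · have him : (H t s).im = 0 := (hstoq t s hst).1
        have hle : (H t s).re ≤ 0 := (hstoq t s hst).2
        rw [Complex.mul_re, him]
        simp only [zero_mul, sub_zero]
        have hzre : ((starRingEnd ℂ) (ψ t) * ψ s).re ≤ (r * φ t) * (r * φ s) := by
          calc ((starRingEnd ℂ) (ψ t) * ψ s).re
              ≤ ‖(starRingEnd ℂ) (ψ t) * ψ s‖ := Complex.re_le_norm _
            _ = ‖ψ t‖ * ‖ψ s‖ := by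
                rw [norm_mul, Complex.norm_conj]
            _ ≤ (r * φ t) * (r * φ s) := by
                rw [habst]
                exact mul_le_mul_of_nonneg_left (habs s) (mul_nonneg hrpos.le (hφ t).le)
        exact mul_le_mul_of_nonpos_left hzre hle
    have h4 : ∑ s, (H t s).re * ((r * φ t) * (r * φ s)) ≤ Ev * ‖ψ t‖ ^ 2 := by
      rw [h1]
      exact Finset.sum_le_sum fun s _ => h3 s
    rw [habst] at h4
    have h5 : (r ^ 2 * φ t) * (∑ s, (H t s).re * φ s) ≤ (r ^ 2 * φ t) * (Ev * φ t) := by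
      calc (r ^ 2 * φ t) * (∑ s, (H t s).re * φ s)
          = ∑ s, (H t s).re * ((r * φ t) * (r * φ s)) := by
            rw [Finset.mul_sum]; congr 1; funext s; ring
        _ ≤ Ev * (r * φ t) ^ 2 := h4
        _ = (r ^ 2 * φ t) * (Ev * φ t) := by ring
    rw [hre]
    have hpos : 0 < r ^ 2 * φ t := mul_pos (pow_pos hrpos 2) (hφ t)
    exact le_of_mul_le_mul_left h5 hpos
  calc (⨅ t : Fin n, ((H.mulVec fun s => (φ s : ℂ)) t).re / φ t)
      ≤ ((H.mulVec fun s => (φ s : ℂ)) t).re / φ t :=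
        ciInf_le (Finite.bddBelow_range _) t
    _ ≤ Ev := by rw [div_le_iff₀ (hφ t)]; exact key
    _ = E := by rw [hE, ← hi₀]
end

section
/- There exists a constant C > 0 such that for every integer T ≥ 1 and every (T+1)×(T+1) complex Hermitian matrix H which is tridiagonal in the standard basis (H_{t,t'} = 0 whenever |t − t'| > 1) and whose entries all have absolute value at most 1, the following holds: writing E_0 ≤ E_1 ≤ ⋯ ≤ E_T for the eigenvalues of H with multiplicity, every unit eigenvector ψ with Hψ = E_0 ψ satisfies (E_1 − E_0) · min{ |ψ_0|², |ψ_T|² } ≤ C/T². -/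
open Matrix


lemma dot_conj {n : Type*} [Fintype n] [DecidableEq n] (M : Matrix n n ℂ)
    (h : M * star M = 1) (x y : n → ℂ) :
    star ((star M) *ᵥ x) ⬝ᵥ ((star M) *ᵥ y) = star x ⬝ᵥ y := by
  rw [star_mulVec, star_eq_conjTranspose, conjTranspose_conjTranspose,
    ← dotProduct_mulVec, mulVec_mulVec, ← star_eq_conjTranspose, h, one_mulVec]

lemma rayleigh2 {T : ℕ} (hT : 1 ≤ T) {H : Matrix (Fin (T+1)) (Fin (T+1)) ℂ}
    (hH : H.IsHermitian)
    (E : Fin (T+1) → ℝ) (hE : Monotone E) (σ : Equiv.Perm (Fin (T+1)))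
    (hσ : ∀ i, E i = hH.eigenvalues (σ i))
    (ψ φ : Fin (T+1) → ℂ) (hψ : star ψ ⬝ᵥ ψ = 1)
    (heig : H.mulVec ψ = (E 0 : ℂ) • ψ)
    (horth : star ψ ⬝ᵥ φ = 0) :
    E 1 * (star φ ⬝ᵥ φ).re ≤ (star φ ⬝ᵥ H.mulVec φ).re := by
  classical
  set U : Matrix (Fin (T+1)) (Fin (T+1)) ℂ :=
    ((hH.eigenvectorUnitary : Matrix.unitaryGroup (Fin (T+1)) ℂ) :
      Matrix (Fin (T+1)) (Fin (T+1)) ℂ) with hU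
  have hUU : U * star U = 1 := (Matrix.mem_unitaryGroup_iff).mp hH.eigenvectorUnitary.2
  set lam := hH.eigenvalues with hlam
  set D : Matrix (Fin (T+1)) (Fin (T+1)) ℂ := diagonal (RCLike.ofReal ∘ lam) with hD
  set c := (star U) *ᵥ φ with hc
  set d := (star U) *ᵥ ψ with hd
  have hcc : star c ⬝ᵥ c = star φ ⬝ᵥ φ := dot_conj U hUU φ φ
  have hdd : star d ⬝ᵥ d = 1 := (dot_conj U hUU ψ ψ).trans hψ
  have hdc : star d ⬝ᵥ c = 0 := (dot_conj U hUU ψ φ).trans horth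
  have hstarc : star c = star φ ᵥ* U := by
    rw [hc, star_mulVec, star_eq_conjTranspose, conjTranspose_conjTranspose]
  have hHφ : star φ ⬝ᵥ H.mulVec φ = star c ⬝ᵥ (D *ᵥ c) := by
    conv_lhs => rw [hH.spectral_theorem, Unitary.conjStarAlgAut_apply]
    rw [← hU, ← hD, Matrix.mul_assoc, ← mulVec_mulVec, dotProduct_mulVec, ← hstarc,
      ← mulVec_mulVec]
  have hDd : D *ᵥ d = (E 0 : ℂ) • d := by
    rw [hD, ← hH.conjStarAlgAut_star_eigenvectorUnitary, Unitary.conjStarAlgAut_apply,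
      Unitary.coe_star, star_star, ← hU, hd, mulVec_mulVec,
      Matrix.mul_assoc (star U * H) U (star U), hUU, Matrix.mul_one, ← mulVec_mulVec,
      heig, mulVec_smul]
  have hdiag : ∀ i, ((lam i : ℂ)) * d i = (E 0 : ℂ) * d i := by
    intro i
    have := congrFun hDd i
    simpa [hD, mulVec_diagonal] using this
  have hmin : ∀ i, E 0 ≤ lam i := by
    intro i
    have := hσ (σ.symm i)
    rw [Equiv.apply_symm_apply] at this
    rw [← this]
    exact hE (Fin.zero_le _)
  have hccre : (star φ ⬝ᵥ φ).re = ∑ i, Complex.normSq (c i) := by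
    rw [← hcc]
    simp [dotProduct, Complex.normSq_eq_conj_mul_self, Complex.re_sum, Complex.normSq_apply]
  have hHre : (star φ ⬝ᵥ H.mulVec φ).re = ∑ i, lam i * Complex.normSq (c i) := by
    rw [hHφ]
    have : star c ⬝ᵥ (D *ᵥ c) = ((∑ i, lam i * Complex.normSq (c i) : ℝ) : ℂ) := by
      rw [hD]
      have hco : (RCLike.ofReal : ℝ → ℂ) = Complex.ofReal := rfl
      push_cast
      simp only [dotProduct, mulVec_diagonal, Function.comp_apply, hco]
      congr 1
      funext i
      rw [Complex.normSq_eq_conj_mul_self]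
      simp only [Pi.star_apply, RCLike.star_def]
      ring
    rw [this, Complex.ofReal_re]
  rw [hccre, hHre, Finset.mul_sum]
  by_cases hgap : E 1 ≤ E 0
  · exact Finset.sum_le_sum fun i _ =>
      mul_le_mul_of_nonneg_right (hgap.trans (hmin i)) (Complex.normSq_nonneg _)
  · push_neg at hgap
    have key : ∀ i, i ≠ σ 0 → E 1 ≤ lam i := by
      intro i hi
      have hne : σ.symm i ≠ 0 := by
        intro h
        exact hi (by rw [← Equiv.apply_symm_apply σ i, h])
      have h1le : (1 : Fin (T+1)) ≤ σ.symm i := by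
        have h0v : (0:ℕ) < (σ.symm i).val := by
          rcases Nat.eq_zero_or_pos (σ.symm i).val with h | h
          · exact absurd (Fin.ext h) hne
          · exact h
        have h1v : (1 : Fin (T+1)).val = 1 := by
          rw [Fin.val_one']
          exact Nat.mod_eq_of_lt (by omega)
        rw [Fin.le_def, h1v]
        omega
      have := hσ (σ.symm i)
      rw [Equiv.apply_symm_apply] at this
      rw [← this]
      exact hE h1le
    have hdzero : ∀ i, i ≠ σ 0 → d i = 0 := by
      intro i hi
      have h1 := hdiag i
      have hne : (lam i : ℂ) - (E 0 : ℂ) ≠ 0 := by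
        have hlt : E 0 < lam i := lt_of_lt_of_le hgap (key i hi)
        intro h
        have h2 : (lam i : ℂ) = (E 0 : ℂ) := by linear_combination h
        rw [Complex.ofReal_inj] at h2
        linarith
      have h3 : ((lam i : ℂ) - (E 0 : ℂ)) * d i = 0 := by linear_combination h1
      rcases mul_eq_zero.mp h3 with h | h
      · exact absurd h hne
      · exact h
    have hd0 : (starRingEnd ℂ) (d (σ 0)) * d (σ 0) = 1 := by
      rw [← hdd]
      symm
      simp only [dotProduct, Pi.star_apply, RCLike.star_def]
      exact Finset.sum_eq_single _ (fun i _ hi => by rw [hdzero i hi]; simp)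
        (fun h => absurd (Finset.mem_univ _) h)
    have hdne : (starRingEnd ℂ) (d (σ 0)) ≠ 0 := by
      intro h
      rw [h, zero_mul] at hd0
      exact zero_ne_one hd0
    have hc0 : c (σ 0) = 0 := by
      have hsum : (starRingEnd ℂ) (d (σ 0)) * c (σ 0) = 0 := by
        rw [← hdc]
        symm
        simp only [dotProduct, Pi.star_apply, RCLike.star_def]
        exact Finset.sum_eq_single _ (fun i _ hi => by rw [hdzero i hi]; simp)
          (fun h => absurd (Finset.mem_univ _) h)
      rcases mul_eq_zero.mp hsum with h | h
      · exact absurd h hdne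
      · exact h
    apply Finset.sum_le_sum
    intro i _
    by_cases hi : i = σ 0
    · rw [hi, hc0]
      simp
    · exact mul_le_mul_of_nonneg_right (key i hi) (Complex.normSq_nonneg _)

lemma dot_self_real {n : ℕ} (ψ : Fin n → ℂ) (g : Fin n → ℝ) :
    star (fun t => (g t : ℂ) * ψ t) ⬝ᵥ (fun t => (g t : ℂ) * ψ t)
      = ((∑ t, (g t)^2 * Complex.normSq (ψ t) : ℝ) : ℂ) := by
  push_cast
  simp only [dotProduct, Pi.star_apply, RCLike.star_def]
  refine Finset.sum_congr rfl fun t _ => ?_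
  rw [Complex.normSq_eq_conj_mul_self]
  simp only [_root_.map_mul, Complex.conj_ofReal]
  push_cast
  ring

lemma dot_weight {n : ℕ} (ψ : Fin n → ℂ) (g : Fin n → ℝ) :
    star ψ ⬝ᵥ (fun t => (g t : ℂ) * ψ t)
      = ((∑ t, g t * Complex.normSq (ψ t) : ℝ) : ℂ) := by
  push_cast
  simp only [dotProduct, Pi.star_apply, RCLike.star_def]
  refine Finset.sum_congr rfl fun t _ => ?_
  rw [Complex.normSq_eq_conj_mul_self]
  ring

lemma neighbor_card {T : ℕ} (t : Fin (T+1)) :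
    (Finset.univ.filter (fun t' : Fin (T+1) => |(t.val : ℤ) - (t'.val : ℤ)| = 1)).card ≤ 2 := by
  classical
  by_contra hcon
  push_neg at hcon
  obtain ⟨a, b, c, ha, hb, hc, hab, hac, hbc⟩ := Finset.two_lt_card_iff.mp hcon
  simp only [Finset.mem_filter, Finset.mem_univ, true_and, Int.abs_eq_natAbs] at ha hb hc
  have h : a.val = b.val ∨ a.val = c.val ∨ b.val = c.val := by omega
  rcases h with h | h | h
  · exact hab (Fin.ext h)
  · exact hac (Fin.ext h)
  · exact hbc (Fin.ext h)

lemma dirichlet {T : ℕ} {H : Matrix (Fin (T+1)) (Fin (T+1)) ℂ} (hH : H.IsHermitian)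
    (htri : ∀ t t' : Fin (T+1), 1 < |(t.val : ℤ) - (t'.val : ℤ)| → H t t' = 0)
    (hent : ∀ t t' : Fin (T+1), ‖H t t'‖ ≤ 1)
    {E0 : ℝ} {ψ : Fin (T+1) → ℂ} (hψ : star ψ ⬝ᵥ ψ = 1)
    (heig : H.mulVec ψ = (E0 : ℂ) • ψ)
    (f : Fin (T+1) → ℝ)
    (hf : ∀ t t' : Fin (T+1), |(t.val : ℤ) - (t'.val : ℤ)| = 1 → (f t - f t')^2 ≤ 1) :
    (star (fun t => (f t : ℂ) * ψ t) ⬝ᵥ H.mulVec (fun t => (f t : ℂ) * ψ t)).re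
      - E0 * (star (fun t => (f t : ℂ) * ψ t) ⬝ᵥ (fun t => (f t : ℂ) * ψ t)).re ≤ 1 := by
  classical
  set φ : Fin (T+1) → ℂ := fun t => (f t : ℂ) * ψ t with hφ
  set a : Fin (T+1) → Fin (T+1) → ℂ :=
    fun t t' => (starRingEnd ℂ) (ψ t) * H t t' * ψ t' with ha
  set V : ℝ := ∑ t, (f t)^2 * Complex.normSq (ψ t) with hV
  have hψt : ∀ t, ∑ t', H t t' * ψ t' = (E0 : ℂ) * ψ t := by
    intro t
    have := congrFun heig t
    simpa [mulVec, dotProduct] using this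
  have hsymm : ∀ t t', (starRingEnd ℂ) (a t t') = a t' t := by
    intro t t'
    have hHc : (starRingEnd ℂ) (H t t') = H t' t := by
      have := congrFun (congrFun hH t') t
      simpa [conjTranspose_apply, RCLike.star_def] using this
    simp only [ha, _root_.map_mul, hHc, RingHomCompTriple.comp_apply, Complex.conj_conj, RingHom.id_apply]
    ring
  -- S1 = ⟨φ, Hφ⟩
  have hS1 : star φ ⬝ᵥ H.mulVec φ = ∑ t, ∑ t', ((f t : ℂ) * (f t' : ℂ)) * a t t' := by
    simp only [dotProduct, mulVec, Pi.star_apply, RCLike.star_def, Finset.mul_sum, hφ, ha]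
    refine Finset.sum_congr rfl fun t _ => Finset.sum_congr rfl fun t' _ => ?_
    simp only [_root_.map_mul, Complex.conj_ofReal]
    ring
  -- S2 is real
  have hS2 : ∑ t, ∑ t', ((f t : ℂ) * (f t : ℂ)) * a t t' = ((E0 * V : ℝ) : ℂ) := by
    have : ∀ t : Fin (T+1), ∑ t', ((f t : ℂ) * (f t : ℂ)) * a t t'
        = ((E0 * ((f t)^2 * Complex.normSq (ψ t)) : ℝ) : ℂ) := by
      intro t
      have h1 : ∑ t', ((f t : ℂ) * (f t : ℂ)) * a t t'
          = ((f t : ℂ) * (f t : ℂ)) * ((starRingEnd ℂ) (ψ t) * ∑ t', H t t' * ψ t') := by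
        rw [Finset.mul_sum, Finset.mul_sum]
        refine Finset.sum_congr rfl fun t' _ => ?_
        simp only [ha]
        ring
      rw [h1, hψt t]
      rw [show ((E0 * ((f t)^2 * Complex.normSq (ψ t)) : ℝ) : ℂ)
          = (E0 : ℂ) * ((f t : ℂ)^2 * ((Complex.normSq (ψ t) : ℝ) : ℂ)) by push_cast; ring,
        Complex.normSq_eq_conj_mul_self]
      ring
    rw [Finset.sum_congr rfl fun t _ => this t, hV]
    push_cast
    rw [Finset.mul_sum]
  -- S3 = conj S2 = S2
  have hS3 : ∑ t, ∑ t', ((f t' : ℂ) * (f t' : ℂ)) * a t t' = ((E0 * V : ℝ) : ℂ) := by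
    have h1 : ∑ t, ∑ t', ((f t' : ℂ) * (f t' : ℂ)) * a t t'
        = (starRingEnd ℂ) (∑ t, ∑ t', ((f t : ℂ) * (f t : ℂ)) * a t t') := by
      rw [map_sum]
      rw [Finset.sum_comm]
      refine Finset.sum_congr rfl fun t' _ => ?_
      rw [map_sum]
      refine Finset.sum_congr rfl fun t _ => ?_
      rw [_root_.map_mul, _root_.map_mul, hsymm, Complex.conj_ofReal]
    rw [h1, hS2, Complex.conj_ofReal]
  -- norm of φ
  have hφφ : star φ ⬝ᵥ φ = ((V : ℝ) : ℂ) := dot_self_real ψ f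
  -- key identity : 2Q = -Σ (f t - f t')² a
  have hkey : 2 * (star φ ⬝ᵥ H.mulVec φ - ((E0 * V : ℝ) : ℂ))
      = -∑ t, ∑ t', (((f t - f t' : ℝ) : ℂ))^2 * a t t' := by
    have hexp : ∑ t, ∑ t', (((f t - f t' : ℝ) : ℂ))^2 * a t t'
        = -(2 * (∑ t, ∑ t', ((f t : ℂ) * (f t' : ℂ)) * a t t')
            - (∑ t, ∑ t', ((f t : ℂ) * (f t : ℂ)) * a t t')
            - (∑ t, ∑ t', ((f t' : ℂ) * (f t' : ℂ)) * a t t')) := by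
      rw [Finset.mul_sum, ← Finset.sum_sub_distrib, ← Finset.sum_sub_distrib, ← Finset.sum_neg_distrib]
      refine Finset.sum_congr rfl fun t _ => ?_
      rw [Finset.mul_sum, ← Finset.sum_sub_distrib, ← Finset.sum_sub_distrib, ← Finset.sum_neg_distrib]
      refine Finset.sum_congr rfl fun t' _ => ?_
      push_cast
      ring
    rw [hS1, hexp, hS2, hS3]
    ring
  -- bound the right-hand side
  have hnorm : ∑ t, Complex.normSq (ψ t) = 1 := by
    have h1 : star ψ ⬝ᵥ ψ = ((∑ t, Complex.normSq (ψ t) : ℝ) : ℂ) := by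
      push_cast
      simp only [dotProduct, Pi.star_apply, RCLike.star_def]
      refine Finset.sum_congr rfl fun t _ => ?_
      rw [Complex.normSq_eq_conj_mul_self]
    rw [hψ] at h1
    exact_mod_cast h1.symm
  set g : Fin (T+1) → Fin (T+1) → ℝ := fun t t' =>
    if |(t.val : ℤ) - (t'.val : ℤ)| = 1
      then (Complex.normSq (ψ t) + Complex.normSq (ψ t'))/2 else 0 with hg
  have hterm : ∀ t t', ‖(((f t - f t' : ℝ) : ℂ))^2 * a t t'‖ ≤ g t t' := by
    intro t t'
    rcases lt_trichotomy (|(t.val : ℤ) - (t'.val : ℤ)|) 1 with h | h | h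
    · have heq : t = t' := by
        have : (t.val : ℤ) = t'.val := by rw [Int.abs_eq_natAbs] at h; omega
        exact Fin.ext (by exact_mod_cast this)
      subst heq
      simp [hg, sub_self]
    · rw [hg]
      simp only [h, if_pos]
      rw [norm_mul, norm_pow, Complex.norm_real, Real.norm_eq_abs, sq_abs, ha]
      have habs : ‖(starRingEnd ℂ) (ψ t) * H t t' * ψ t'‖
          ≤ ‖ψ t‖ * ‖ψ t'‖ := by
        rw [norm_mul, norm_mul, Complex.norm_conj]
        calc ‖ψ t‖ * ‖H t t'‖ * ‖ψ t'‖
            ≤ ‖ψ t‖ * 1 * ‖ψ t'‖ := by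
              apply mul_le_mul_of_nonneg_right _ (norm_nonneg _)
              exact mul_le_mul_of_nonneg_left (hent t t') (norm_nonneg _)
          _ = ‖ψ t‖ * ‖ψ t'‖ := by ring
      have hamgm : ‖ψ t‖ * ‖ψ t'‖
          ≤ (Complex.normSq (ψ t) + Complex.normSq (ψ t'))/2 := by
        rw [← Complex.sq_norm, ← Complex.sq_norm]
        nlinarith [sq_nonneg (‖ψ t‖ - ‖ψ t'‖)]
      calc (f t - f t')^2 * ‖(starRingEnd ℂ) (ψ t) * H t t' * ψ t'‖
          ≤ 1 * (‖ψ t‖ * ‖ψ t'‖) := by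
            apply mul_le_mul (hf t t' h) habs (norm_nonneg _) zero_le_one
        _ ≤ (Complex.normSq (ψ t) + Complex.normSq (ψ t'))/2 := by rw [one_mul]; exact hamgm
    · have hzero : H t t' = 0 := htri t t' h
      have : a t t' = 0 := by rw [ha]; simp [hzero]
      rw [this, mul_zero]
      simp only [norm_zero, hg]
      split
      · have h1 := Complex.normSq_nonneg (ψ t)
        have h2 := Complex.normSq_nonneg (ψ t')
        linarith
      · exact le_refl 0
  have hgsum : ∑ t, ∑ t', g t t' ≤ 2 := by
    have hsplit : ∀ t t', g t t'
        = (if |(t.val : ℤ) - (t'.val : ℤ)| = 1 then Complex.normSq (ψ t)/2 else 0)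
          + (if |(t.val : ℤ) - (t'.val : ℤ)| = 1 then Complex.normSq (ψ t')/2 else 0) := by
      intro t t'
      simp only [hg]
      split_ifs <;> ring
    have hcard : ∀ t : Fin (T+1), ∀ w : ℝ, 0 ≤ w →
        ∑ t' : Fin (T+1), (if |(t.val : ℤ) - (t'.val : ℤ)| = 1 then w else 0) ≤ 2 * w := by
      intro t w hw
      rw [← Finset.sum_filter, Finset.sum_const, nsmul_eq_mul]
      exact mul_le_mul_of_nonneg_right (by exact_mod_cast neighbor_card t) hw
    have h1 : ∀ t : Fin (T+1), ∑ t' : Fin (T+1),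
        (if |(t.val : ℤ) - (t'.val : ℤ)| = 1 then Complex.normSq (ψ t)/2 else 0)
        ≤ Complex.normSq (ψ t) := by
      intro t
      have := hcard t (Complex.normSq (ψ t)/2) (by have := Complex.normSq_nonneg (ψ t); linarith)
      linarith
    have h2 : ∑ t : Fin (T+1), ∑ t' : Fin (T+1),
        (if |(t.val : ℤ) - (t'.val : ℤ)| = 1 then Complex.normSq (ψ t')/2 else 0) ≤ 1 := by
      rw [Finset.sum_comm]
      calc ∑ t' : Fin (T+1), ∑ t : Fin (T+1),
            (if |(t.val : ℤ) - (t'.val : ℤ)| = 1 then Complex.normSq (ψ t')/2 else 0)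
          ≤ ∑ t' : Fin (T+1), Complex.normSq (ψ t') := by
            refine Finset.sum_le_sum fun t' _ => ?_
            refine le_trans (le_of_eq (Finset.sum_congr rfl fun t _ => by rw [abs_sub_comm])) ?_
            have := hcard t' (Complex.normSq (ψ t')/2) (by have := Complex.normSq_nonneg (ψ t'); linarith)
            linarith
        _ = 1 := hnorm
    calc ∑ t, ∑ t', g t t'
        = (∑ t : Fin (T+1), ∑ t' : Fin (T+1),
            (if |(t.val : ℤ) - (t'.val : ℤ)| = 1 then Complex.normSq (ψ t)/2 else 0))
          + (∑ t : Fin (T+1), ∑ t' : Fin (T+1),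
            (if |(t.val : ℤ) - (t'.val : ℤ)| = 1 then Complex.normSq (ψ t')/2 else 0)) := by
          simp_rw [hsplit, Finset.sum_add_distrib]
      _ ≤ 1 + 1 :=
          add_le_add (le_trans (Finset.sum_le_sum fun t _ => h1 t) (le_of_eq hnorm)) h2
      _ = 2 := by norm_num
  have hbound : ‖∑ t, ∑ t', (((f t - f t' : ℝ) : ℂ))^2 * a t t'‖ ≤ 2 :=
    calc ‖∑ t, ∑ t', (((f t - f t' : ℝ) : ℂ))^2 * a t t'‖
        ≤ ∑ t, ‖∑ t', (((f t - f t' : ℝ) : ℂ))^2 * a t t'‖ :=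
          norm_sum_le _ _
      _ ≤ ∑ t, ∑ t', ‖(((f t - f t' : ℝ) : ℂ))^2 * a t t'‖ :=
          Finset.sum_le_sum fun t _ => norm_sum_le _ _
      _ ≤ ∑ t, ∑ t', g t t' :=
          Finset.sum_le_sum fun t _ => Finset.sum_le_sum fun t' _ => hterm t t'
      _ ≤ 2 := hgsum
  -- conclude
  have hre : 2 * ((star φ ⬝ᵥ H.mulVec φ).re - E0 * V) ≤ 2 := by
    have h1 : (2 * (star φ ⬝ᵥ H.mulVec φ - ((E0 * V : ℝ) : ℂ))).re
        = 2 * ((star φ ⬝ᵥ H.mulVec φ).re - E0 * V) := by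
      simp [Complex.sub_re, Complex.ofReal_re]
    rw [← h1, hkey]
    calc (-∑ t, ∑ t', (((f t - f t' : ℝ) : ℂ))^2 * a t t').re
        ≤ ‖-∑ t, ∑ t', (((f t - f t' : ℝ) : ℂ))^2 * a t t'‖ := Complex.re_le_norm _
      _ = ‖∑ t, ∑ t', (((f t - f t' : ℝ) : ℂ))^2 * a t t'‖ := by rw [norm_neg]
      _ ≤ 2 := hbound
  rw [hφφ]
  simp only [Complex.ofReal_re]
  linarith


theorem stmt10 :
    ∃ C : ℝ, 0 < C ∧ ∀ T : ℕ, 1 ≤ T →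
      ∀ H : Matrix (Fin (T + 1)) (Fin (T + 1)) ℂ, ∀ hH : H.IsHermitian,
      (∀ t t' : Fin (T + 1), 1 < |(t.val : ℤ) - (t'.val : ℤ)| → H t t' = 0) →
      (∀ t t' : Fin (T + 1), ‖H t t'‖ ≤ 1) →
      -- `E` is the nondecreasing enumeration of the eigenvalues of `H` with multiplicity
      ∀ E : Fin (T + 1) → ℝ, Monotone E →
      (∃ σ : Equiv.Perm (Fin (T + 1)), ∀ i, E i = hH.eigenvalues (σ i)) →
      ∀ ψ : Fin (T + 1) → ℂ, star ψ ⬝ᵥ ψ = 1 →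
        H.mulVec ψ = (E 0 : ℂ) • ψ →
        (E 1 - E 0) * min (‖ψ 0‖ ^ 2) (‖ψ (Fin.last T)‖ ^ 2)
          ≤ C / (T : ℝ) ^ 2 := by
  refine ⟨2, two_pos, ?_⟩
  intro T hT H hH htri hent E hE hperm ψ hψ heig
  obtain ⟨σ, hσ⟩ := hperm
  set μ : ℝ := ∑ t : Fin (T+1), (t.val : ℝ) * Complex.normSq (ψ t) with hμ
  set f : Fin (T+1) → ℝ := fun t => (t.val : ℝ) - μ with hfdef
  set V : ℝ := ∑ t, (f t)^2 * Complex.normSq (ψ t) with hVdef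
  have hnorm1 : ∑ t, Complex.normSq (ψ t) = 1 := by
    have h1 : star ψ ⬝ᵥ ψ = ((∑ t, Complex.normSq (ψ t) : ℝ) : ℂ) := by
      push_cast
      simp only [dotProduct, Pi.star_apply, RCLike.star_def]
      refine Finset.sum_congr rfl fun t _ => ?_
      rw [Complex.normSq_eq_conj_mul_self]
    rw [hψ] at h1
    exact_mod_cast h1.symm
  have horth : star ψ ⬝ᵥ (fun t => (f t : ℂ) * ψ t) = 0 := by
    rw [dot_weight ψ f]
    have : ∑ t, f t * Complex.normSq (ψ t) = 0 := by
      simp only [hfdef, sub_mul]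
      rw [Finset.sum_sub_distrib, ← Finset.mul_sum, hnorm1, ← hμ]
      ring
    rw [this]
    exact Complex.ofReal_zero
  have hφφ : (star (fun t => (f t : ℂ) * ψ t) ⬝ᵥ (fun t => (f t : ℂ) * ψ t)).re = V := by
    rw [dot_self_real ψ f, Complex.ofReal_re]
  have hray : E 1 * V ≤ (star (fun t => (f t : ℂ) * ψ t) ⬝ᵥ
      H.mulVec (fun t => (f t : ℂ) * ψ t)).re := by
    have := rayleigh2 hT hH E hE σ hσ ψ (fun t => (f t : ℂ) * ψ t) hψ heig horth
    rwa [hφφ] at this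
  have hf : ∀ t t' : Fin (T+1), |(t.val : ℤ) - (t'.val : ℤ)| = 1 → (f t - f t')^2 ≤ 1 := by
    intro t t' h
    have hz : ((t.val : ℤ) - t'.val)^2 = 1 := by rw [← sq_abs, h]; norm_num
    have heq : (f t - f t')^2 = 1 := by
      have h2 : (f t - f t')^2 = ((((t.val : ℤ) - t'.val : ℤ)) : ℝ)^2 := by
        simp only [hfdef]
        push_cast
        ring
      rw [h2]
      exact_mod_cast hz
    linarith
  have hdir : (star (fun t => (f t : ℂ) * ψ t) ⬝ᵥ H.mulVec (fun t => (f t : ℂ) * ψ t)).re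
      - E 0 * V ≤ 1 := by
    have := dirichlet hH htri hent hψ heig f hf
    rwa [hφφ] at this
  have hgapV : (E 1 - E 0) * V ≤ 1 := by nlinarith [hray, hdir]
  have hg0 : 0 ≤ E 1 - E 0 := sub_nonneg.mpr (hE (Fin.zero_le 1))
  set m : ℝ := min (‖ψ 0‖ ^ 2) (‖ψ (Fin.last T)‖ ^ 2) with hm
  have hm' : m = min (Complex.normSq (ψ 0)) (Complex.normSq (ψ (Fin.last T))) := by
    rw [hm, Complex.sq_norm, Complex.sq_norm]
  have hm0 : 0 ≤ m := le_min (sq_nonneg _) (sq_nonneg _)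
  -- variance lower bound
  have h0l : (0 : Fin (T+1)) ≠ Fin.last T := by
    intro h
    have := congrArg Fin.val h
    simp only [Fin.val_last, Fin.val_zero] at this
    omega
  have hsub : (f 0)^2 * Complex.normSq (ψ 0)
      + (f (Fin.last T))^2 * Complex.normSq (ψ (Fin.last T)) ≤ V := by
    calc (f 0)^2 * Complex.normSq (ψ 0)
        + (f (Fin.last T))^2 * Complex.normSq (ψ (Fin.last T))
        = ∑ t ∈ ({0, Fin.last T} : Finset (Fin (T+1))), (f t)^2 * Complex.normSq (ψ t) := by
          rw [Finset.sum_pair h0l]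
      _ ≤ V := by
          rw [hVdef]
          refine Finset.sum_le_sum_of_subset_of_nonneg (Finset.subset_univ _) ?_
          intro t _ _
          exact mul_nonneg (sq_nonneg _) (Complex.normSq_nonneg _)
  have hends : ((T : ℝ)^2 / 2) * m ≤ V := by
    have hfl : f (Fin.last T) - f 0 = (T : ℝ) := by
      simp only [hfdef, Fin.val_last, Fin.val_zero]
      push_cast
      ring
    have h2 : m ≤ Complex.normSq (ψ 0) := by rw [hm']; exact min_le_left _ _
    have h3 : m ≤ Complex.normSq (ψ (Fin.last T)) := by rw [hm']; exact min_le_right _ _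
    have key : ∀ a b n0 nl VV mm TT : ℝ, b - a = TT → mm ≤ n0 → mm ≤ nl → 0 ≤ mm →
        a^2*n0 + b^2*nl ≤ VV → (TT^2/2)*mm ≤ VV := by
      intro a b n0 nl VV mm TT h1 h2 h3 h4 h5
      have hsq : TT^2 = (b - a)^2 := by rw [h1]
      have ha : a^2 * (n0 - mm) ≥ 0 := mul_nonneg (sq_nonneg _) (by linarith)
      have hb : b^2 * (nl - mm) ≥ 0 := mul_nonneg (sq_nonneg _) (by linarith)
      nlinarith [sq_nonneg (a + b), mul_nonneg (sq_nonneg (a+b)) h4, ha, hb]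
    exact key (f 0) (f (Fin.last T)) (Complex.normSq (ψ 0))
      (Complex.normSq (ψ (Fin.last T))) V m (T : ℝ) hfl h2 h3 hm0 hsub
  have hT2 : (0 : ℝ) < (T : ℝ)^2 := by positivity
  have h5 : (E 1 - E 0) * (((T : ℝ)^2 / 2) * m) ≤ 1 :=
    le_trans (mul_le_mul_of_nonneg_left hends hg0) hgapV
  calc (E 1 - E 0) * m
      = ((E 1 - E 0) * (((T : ℝ)^2 / 2) * m)) * (2 / (T : ℝ)^2) := by
        field_simp
    _ ≤ 1 * (2 / (T : ℝ)^2) := mul_le_mul_of_nonneg_right h5 (by positivity)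
    _ = 2 / (T : ℝ)^2 := one_mul _
end
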